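/- arXiv:2105.00513 — 4 statements merged into one kernel-verified Lean document; each statement's English description precedes it below -/
import Mathlib

section
/- Let q be a prime power. For every integer k with q+1 ≤ k ≤ 2q−2 there exists an almost MDS Hermitian self-orthogonal linear code over F_{q^2} with parameters [q^2+1, k, q^2+1−k]. -/
/-- The Hermitian inner product `⟨x,y⟩ₕ = ∑ i, x i * (y i)^q` on `Fin n → F`. -/
def hermInner (q : ℕ) {F : Type} [Field F] {n : ℕ} (x y : Fin n → F) : F :=
  ∑ i, x i * y i ^ q

/-- The Hermitian dual of a set `C` of codewords:
`C^{⊥ₕ} = {y | ∀ x ∈ C, ⟨x,y⟩ₕ = 0}`. -/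
def hermDual (q : ℕ) {F : Type} [Field F] {n : ℕ} (C : Set (Fin n → F)) :
    Set (Fin n → F) :=
  {y | ∀ x ∈ C, hermInner q x y = 0}

/-- A linear code `C` is Hermitian self-orthogonal if `C ⊆ C^{⊥ₕ}`. -/
def IsHermSelfOrth (q : ℕ) {F : Type} [Field F] {n : ℕ}
    (C : Submodule F (Fin n → F)) : Prop :=
  (C : Set (Fin n → F)) ⊆ hermDual q (C : Set (Fin n → F))

/-- The dimension of the Hermitian hull `Hull_h(C) = C ∩ C^{⊥ₕ}` of a linear code `C`
(the hull is a linear subspace, so taking the span does not change it). -/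
noncomputable def hermHullDim (q : ℕ) {F : Type} [Field F] {n : ℕ}
    (C : Submodule F (Fin n → F)) : ℕ :=
  Module.finrank F
    (Submodule.span F ((C : Set (Fin n → F)) ∩ hermDual q (C : Set (Fin n → F))))

/-- `d` is the minimum Hamming distance of the set `S` of codewords, i.e. the least
Hamming weight of a nonzero element of `S`. -/
def HasMinDist {F : Type} [Field F] [DecidableEq F] {n : ℕ}
    (S : Set (Fin n → F)) (d : ℕ) : Prop :=
  IsLeast {w | ∃ x ∈ S, x ≠ 0 ∧ hammingNorm x = w} d

namespace AMDSaux

open Polynomial Finset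

/-- Arithmetic classification of pairs `(a,b)` with `q²-1 ∣ a+bq`. -/
lemma arith {q a b : ℕ} (hq3 : 3 ≤ q) (ha : a ≤ 2*q-2) (hb : b ≤ 2*q-2)
    (hdvd : (q^2-1) ∣ (a + b*q)) (h0 : a + b*q ≠ 0) :
    (a = q-1 ∧ b = q-1) ∨ (a = 2*q-2 ∧ b = 2*q-2) := by
  obtain ⟨c, hc⟩ := hdvd
  obtain ⟨s, rfl⟩ : ∃ s, q = s+3 := ⟨q-3, by omega⟩
  have ha' : a ≤ 2*s+4 := by omega
  have hb' : b ≤ 2*s+4 := by omega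
  have hN : (s+3)^2 - 1 = s*s + 6*s + 8 := Nat.sub_eq_of_eq_add (by ring)
  rw [hN] at hc
  have hble : b*(s+3) ≤ (2*s+4)*(s+3) := Nat.mul_le_mul_right _ hb'
  have he0 : (2*s+4)*(s+3) = 2*(s*s) + 10*s + 12 := by ring
  have hcle : c ≤ 2 := by
    by_contra h
    push_neg at h
    have h3 : (s*s+6*s+8)*3 ≤ (s*s+6*s+8)*c := Nat.mul_le_mul_left _ h
    nlinarith
  interval_cases c
  · simp only [Nat.mul_zero] at hc
    exact absurd hc h0
  · -- a + b*(s+3) = s*s+6*s+8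
    rw [mul_one] at hc
    have hb1 : b ≤ s+2 := by
      by_contra h
      push_neg at h
      have h2 : (s+3)*(s+3) ≤ b*(s+3) := Nat.mul_le_mul_right _ (by omega)
      nlinarith
    have hb2 : s+2 ≤ b := by
      by_contra h
      push_neg at h
      have h2 : b*(s+3) ≤ (s+1)*(s+3) := Nat.mul_le_mul_right _ (by omega)
      nlinarith
    have hb3 : b = s+2 := le_antisymm hb1 hb2
    subst hb3
    have h4 : (s+2)*(s+3) = s*s + 5*s + 6 := by ring
    left
    constructor
    · omega
    · omega
  · -- a + b*(s+3) = 2*(s*s+6*s+8)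
    have hb2 : 2*s+4 ≤ b := by
      by_contra h
      push_neg at h
      have h2 : b*(s+3) ≤ (2*s+3)*(s+3) := Nat.mul_le_mul_right _ (by omega)
      nlinarith
    have hb3 : b = 2*s+4 := le_antisymm hb' hb2
    subst hb3
    have h4 : (2*s+4)*(s+3) = 2*(s*s) + 10*s + 12 := by ring
    right
    constructor
    · omega
    · omega

/-- Power sums over a finite field of cardinality `q²`. -/
lemma sum_pow_card {F : Type} [Field F] [Fintype F] [DecidableEq F] {q : ℕ}
    (hF : Fintype.card F = q^2) (m : ℕ) :
    ∑ x : F, x^m = if (m ≠ 0 ∧ (q^2-1) ∣ m) then (-1 : F) else 0 := by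
  by_cases hm : m = 0
  · subst hm
    rw [if_neg (by simp)]
    simp only [pow_zero, Finset.sum_const, Finset.card_univ, nsmul_eq_mul, mul_one]
    exact FiniteField.cast_card_eq_zero F
  · have hmap : (univ : Finset Fˣ).map ⟨(Units.val : Fˣ → F), fun _ _ => Units.ext⟩ = univ \ {0} := by
      ext x
      simp only [mem_map, mem_univ, true_and, Function.Embedding.coeFn_mk, mem_sdiff,
        mem_singleton]
      constructor
      · rintro ⟨a, rfl⟩
        exact a.ne_zero
      · intro h
        exact ⟨Units.mk0 x h, rfl⟩
    have h1 : ∑ x : F, x^m = ∑ u : Fˣ, ((u : F))^m := by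
      calc ∑ x : F, x^m = ∑ x ∈ (univ \ {0} : Finset F), x^m := by
            refine (Finset.sum_subset (Finset.sdiff_subset) ?_).symm
            intro x _ hx
            have hx0 : x = 0 := by
              by_contra h
              exact hx (by simp [h])
            subst hx0
            exact zero_pow hm
        _ = ∑ u : Fˣ, ((u : F))^m := by rw [← hmap, Finset.sum_map]; rfl
    rw [h1, FiniteField.sum_pow_units F m, hF]
    simp [hm]

/-- The basic character-sum computation for exponents `x^α * (x^β)^q`. -/
lemma Tval {F : Type} [Field F] [Fintype F] [DecidableEq F] {q : ℕ}
    (hF : Fintype.card F = q^2) (hq3 : 3 ≤ q) {α β : ℕ}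
    (hα : α ≤ 2*q-2) (hβ : β ≤ 2*q-2) :
    ∑ x : F, x^α * (x^β)^q
      = if (α = q-1 ∧ β = q-1) ∨ (α = 2*q-2 ∧ β = 2*q-2) then (-1:F) else 0 := by
  have h1 : ∀ x : F, x^α * (x^β)^q = x^(α + β*q) := fun x => by
    rw [← pow_mul, ← pow_add]
  rw [Finset.sum_congr rfl (fun x _ => h1 x), sum_pow_card hF]
  refine if_congr ?_ rfl rfl
  constructor
  · rintro ⟨h0, hdvd⟩
    exact arith hq3 hα hβ hdvd h0
  · have hq2 : 9 ≤ q^2 := by nlinarith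
    rintro (⟨rfl1, rfl2⟩ | ⟨rfl1, rfl2⟩)
    · subst rfl1; subst rfl2
      have he : (q-1) + (q-1)*q = q^2-1 := by
        zify [show 1 ≤ q by omega, show 1 ≤ q^2 by omega]
        ring
      rw [he]
      exact ⟨by omega, dvd_refl _⟩
    · subst rfl1; subst rfl2
      have he : (2*q-2) + (2*q-2)*q = 2*(q^2-1) := by
        zify [show 2 ≤ 2*q by omega, show 1 ≤ q^2 by omega]
        ring
      rw [he]
      exact ⟨by omega, Dvd.intro 2 (by ring)⟩

/-- The number of roots (in the field) of a nonzero polynomial is at most its degree. -/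
lemma card_eval_zero_le {F : Type} [Field F] [Fintype F] [DecidableEq F]
    (P : F[X]) (hP : P ≠ 0) :
    (univ.filter fun x => P.eval x = 0).card ≤ P.natDegree := by
  refine le_trans (le_trans (Finset.card_le_card ?_) (Multiset.toFinset_card_le _))
    (P.card_roots')
  intro x hx
  simp only [mem_filter] at hx
  rw [Multiset.mem_toFinset, mem_roots']
  exact ⟨hP, hx.2⟩

end AMDSaux

set_option maxHeartbeats 2000000 in
open Polynomial Finset AMDSaux in
/-- For every `q+1 ≤ k ≤ 2q-2` there exists an almost MDS Hermitian
self-orthogonal `[q²+1, k, q²+1-k]` code over `F_{q²}`. -/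
theorem amds_herm_self_orth_q_sq_add_one
    (q : ℕ) (hq : IsPrimePow q)
    (F : Type) [Field F] [Fintype F] [DecidableEq F]
    (hF : Fintype.card F = q ^ 2)
    (k : ℕ) (hk1 : q + 1 ≤ k) (hk2 : k ≤ 2 * q - 2) :
    ∃ C : Submodule F (Fin (q ^ 2 + 1) → F),
      IsHermSelfOrth q C ∧ Module.finrank F C = k ∧
        HasMinDist (C : Set (Fin (q ^ 2 + 1) → F)) (q ^ 2 + 1 - k) := by
  classical
  have hq3 : 3 ≤ q := by omega
  have hq1k : q - 1 < k := by omega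
  have hkq2 : k < q^2 := by
    have h1 : 2*q ≤ q*q := Nat.mul_le_mul_right q (by omega)
    have h2 : q^2 = q*q := sq q
    omega
  have hq0 : q ≠ 0 := by omega
  -- characteristic facts
  obtain ⟨p, e, hpp, he, hpe⟩ := hq
  have hppn : p.Prime := hpp.nat_prime
  haveI : Fact p.Prime := ⟨hppn⟩
  haveI : CharP F (ringChar F) := ringChar.charP F
  obtain ⟨n, hrp, hcard⟩ := FiniteField.card F (ringChar F)
  have hrpp : ringChar F = p := by
    have h1 : (ringChar F)^(n:ℕ) = p^(2*e) := by
      rw [← hcard, hF, ← hpe]; ring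
    have h2 : ringChar F ∣ p^(2*e) := h1 ▸ dvd_pow_self (ringChar F) (by positivity)
    exact (Nat.prime_dvd_prime_iff_eq hrp hppn).mp (hrp.dvd_of_dvd_pow h2)
  haveI : CharP F p := hrpp ▸ ringChar.charP F
  haveI : ExpChar F p := .prime hppn
  have hfrob : ∀ x : F, x ^ q = iterateFrobenius F p e x := fun x => by
    rw [iterateFrobenius_def, hpe]
  have frob_sum : ∀ (g : Fin k → F), (∑ i, g i)^q = ∑ i, (g i)^q := fun g => by
    rw [hfrob, map_sum]
    exact Finset.sum_congr rfl fun i _ => (hfrob (g i)).symm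
  have frob_add : ∀ x y : F, (x+y)^q = x^q + y^q := fun x y => by
    rw [hfrob, hfrob, hfrob, map_add]
  -- the degree set parameter d
  set d : ℕ := if k = 2*q-2 then q+1 else q-1 with hd_def
  have hd_pos : 0 < d := by rw [hd_def]; split <;> omega
  have hd_le_q1 : d ≤ q+1 := by rw [hd_def]; split <;> omega
  have hd_le_k : d ≤ k := by rw [hd_def]; split <;> omega
  have hsq : q^2 - 1 = (q-1)*(q+1) := by
    zify [show 1 ≤ q by omega, show 1 ≤ q^2 by nlinarith]
    ring
  have hd_dvd : d ∣ q^2 - 1 := by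
    rw [hsq, hd_def]
    split
    · exact dvd_mul_left _ _
    · exact dvd_mul_right _ _
  have hm_lt : k - d < q - 1 := by rw [hd_def]; split <;> omega
  -- a primitive d-th root of unity
  obtain ⟨g0, hg0⟩ := IsCyclic.exists_ofOrder_eq_natCard (α := Fˣ)
  have hcardU : Nat.card Fˣ = q^2 - 1 := by
    rw [Nat.card_eq_fintype_card, Fintype.card_units, hF]
  rw [hcardU] at hg0
  have hN0 : q^2 - 1 ≠ 0 := by nlinarith
  have hζord : orderOf (g0 ^ ((q^2-1)/d)) = d := by
    rw [orderOf_pow, hg0, Nat.gcd_eq_right (Nat.div_dvd_of_dvd hd_dvd),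
      Nat.div_div_self hd_dvd hN0]
  have hζ : IsPrimitiveRoot ((g0 ^ ((q^2-1)/d) : Fˣ) : F) d := by
    have h1 := IsPrimitiveRoot.orderOf (g0 ^ ((q^2-1)/d))
    rw [hζord] at h1
    exact IsPrimitiveRoot.coe_units_iff.mpr h1
  -- choose the extra root set B
  have hq2q : 2*q+3 ≤ q^2 := by nlinarith
  have hBex : k - d ≤ (univ \ insert (0:F) (nthRootsFinset d (1:F))).card := by
    have h1 : (insert (0:F) (nthRootsFinset d (1:F))).card ≤ d + 1 :=
      le_trans (card_insert_le _ _) (by rw [hζ.card_nthRootsFinset])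
    have h2 : (univ \ insert (0:F) (nthRootsFinset d (1:F))).card
        = q^2 - (insert (0:F) (nthRootsFinset d (1:F))).card := by
      rw [card_sdiff_of_subset (subset_univ _), card_univ, hF]
    omega
  obtain ⟨B, hBsub, hBcard⟩ := Finset.exists_subset_card_eq hBex
  have hB0 : (0:F) ∉ B := by
    intro h
    have := hBsub h
    simp at this
  have hBroot : ∀ b ∈ B, b ∉ nthRootsFinset d (1:F) := by
    intro b hb hroot
    have := hBsub hb
    simp only [mem_sdiff, mem_univ, true_and, mem_insert] at this
    exact this (Or.inr hroot)
  -- the witness polynomial f = (X^d - 1) * ∏ (X - b)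
  set G : F[X] := ∏ b ∈ B, (X - C b) with hG_def
  have hGmonic : G.Monic := monic_prod_of_monic _ _ fun b _ => monic_X_sub_C b
  have hGdeg : G.natDegree = k - d := by
    rw [hG_def, natDegree_prod _ _ (fun b _ => X_sub_C_ne_zero b)]
    simp [hBcard]
  set f : F[X] := (X^d - 1) * G with hf_def
  have hXdmonic : (X^d - (1:F[X])).Monic := by
    simpa using monic_X_pow_sub_C (1:F) hd_pos.ne'
  have hfmonic : f.Monic := hXdmonic.mul hGmonic
  have hXddeg : (X^d - (1:F[X])).natDegree = d := by
    simpa using (natDegree_X_pow_sub_C (n := d) (r := (1:F)))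
  have hfdeg : f.natDegree = k := by
    rw [hf_def, hXdmonic.natDegree_mul hGmonic, hXddeg, hGdeg]
    omega
  -- t and γ
  set t : F := f.coeff (q-1) with ht_def
  have hGq1 : G.coeff (q-1) = 0 :=
    coeff_eq_zero_of_natDegree_lt (by omega)
  have hG0 : G.coeff 0 ≠ 0 := by
    rw [hG_def, coeff_zero_eq_eval_zero, eval_prod]
    rw [Finset.prod_ne_zero_iff]
    intro b hb
    simp only [eval_sub, eval_X, eval_C, zero_sub, ne_eq, neg_eq_zero]
    exact fun h => hB0 (h ▸ hb)
  have htval : t = if k = 2*q-2 then 0 else G.coeff 0 := by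
    rw [ht_def, hf_def, sub_mul, one_mul, coeff_sub, mul_comm, coeff_mul_X_pow', hGq1]
    by_cases hk' : k = 2*q-2
    · rw [if_pos hk']
      have : ¬ (d ≤ q-1) := by rw [hd_def, if_pos hk']; omega
      rw [if_neg this]
      ring
    · rw [if_neg hk']
      have hd' : d = q-1 := by rw [hd_def, if_neg hk']
      rw [if_pos (by omega), hd']
      simp
  set γ : F := if k = 2*q-2 then 1 else t with hγ_def
  have hγ0 : γ ≠ 0 := by
    rw [hγ_def]
    split
    · exact one_ne_zero
    · rw [htval, if_neg (by assumption)]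
      exact hG0
  have hγkey : γ^q * γ + ((if k = 2*q-2 then (-1:F) else 0) - t^q * t) = 0 := by
    by_cases hk' : k = 2*q-2
    · rw [hγ_def, htval, if_pos hk', if_pos hk', if_pos hk', one_pow, one_mul,
        zero_pow hq0, zero_mul]
      ring
    · rw [hγ_def, if_neg hk', if_neg hk']
      ring
  -- the coordinate equivalence
  have hcardopt : Fintype.card (Fin (q^2+1)) = Fintype.card (Option F) := by
    simp [hF]
  set σ : Fin (q^2+1) ≃ Option F := Fintype.equivOfCardEq hcardopt with hσ_def
  -- the generator polynomials
  set i0 : Fin k := ⟨q-1, hq1k⟩ with hi0_def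
  set vP : Fin k → F[X] :=
    fun i => if (i:ℕ) = q-1 then X^k + C t * X^(q-1) else X^(i:ℕ) with hvP_def
  set P : (Fin k → F) → F[X] := fun c => ∑ i, C (c i) * vP i with hP_def
  have hne_i0 : ∀ i : Fin k, i ≠ i0 → (i:ℕ) ≠ q-1 := by
    intro i hi h
    apply hi
    apply Fin.ext
    rw [h, hi0_def]
  have hvP_i0 : vP i0 = X^k + C t * X^(q-1) := by
    rw [hvP_def, hi0_def]
    exact if_pos rfl
  have hvP_ne : ∀ i : Fin k, i ≠ i0 → vP i = X^(i:ℕ) := by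
    intro i hi
    rw [hvP_def]
    exact if_neg (hne_i0 i hi)
  have hvP_i0_eval : ∀ x : F, (vP i0).eval x = x^k + t * x^(q-1) := by
    intro x
    rw [hvP_i0]
    simp
  have hvP_ne_eval : ∀ (i : Fin k), i ≠ i0 → ∀ x : F, (vP i).eval x = x^(i:ℕ) := by
    intro i hi x
    rw [hvP_ne i hi]
    simp
  have hP_eval : ∀ (c : Fin k → F) (x : F),
      (P c).eval x = ∑ i, c i * (vP i).eval x := by
    intro c x
    rw [hP_def, eval_finset_sum]
    exact Finset.sum_congr rfl fun i _ => by rw [eval_mul, eval_C]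
  have hP_coeff : ∀ (c : Fin k → F) (j : ℕ),
      (P c).coeff j = ∑ i, c i * (vP i).coeff j := by
    intro c j
    rw [hP_def, finset_sum_coeff]
    exact Finset.sum_congr rfl fun i _ => by rw [coeff_C_mul]
  have hvP_i0_coeff : ∀ j : ℕ,
      (vP i0).coeff j = (if j = k then 1 else 0) + t * (if j = q-1 then 1 else 0) := by
    intro j
    rw [hvP_i0, coeff_add, coeff_X_pow, coeff_C_mul, coeff_X_pow]
  have hvP_ne_coeff : ∀ (i : Fin k), i ≠ i0 → ∀ j : ℕ,
      (vP i).coeff j = if j = (i:ℕ) then 1 else 0 := by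
    intro i hi j
    rw [hvP_ne i hi, coeff_X_pow]
  have hkq1 : ¬(k = q-1) := by omega
  have hq1k'' : ¬(q-1 = k) := by omega
  have hP_coeff_k : ∀ c : Fin k → F, (P c).coeff k = c i0 := by
    intro c
    rw [hP_coeff, Finset.sum_eq_single i0]
    · rw [hvP_i0_coeff, if_pos rfl, if_neg hkq1]
      ring
    · intro i _ hi
      rw [hvP_ne_coeff i hi, if_neg (by have := i.isLt; omega), mul_zero]
    · intro h
      exact absurd (mem_univ i0) h
  have hP_coeff_q1 : ∀ c : Fin k → F, (P c).coeff (q-1) = t * c i0 := by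
    intro c
    rw [hP_coeff, Finset.sum_eq_single i0]
    · rw [hvP_i0_coeff, if_pos rfl, if_neg hq1k'']
      ring
    · intro i _ hi
      rw [hvP_ne_coeff i hi, if_neg (fun h => hne_i0 i hi h.symm), mul_zero]
    · intro h
      exact absurd (mem_univ i0) h
  have hP_coeff_lt : ∀ (c : Fin k → F) (j : ℕ) (hj : j < k), j ≠ q-1 →
      (P c).coeff j = c ⟨j, hj⟩ := by
    intro c j hj hjq
    have hji0 : (⟨j, hj⟩ : Fin k) ≠ i0 := by
      intro h
      rw [hi0_def] at h
      exact hjq (by simpa using congrArg Fin.val h)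
    rw [hP_coeff, Finset.sum_eq_single (⟨j, hj⟩ : Fin k)]
    · rw [hvP_ne_coeff _ hji0, if_pos rfl, mul_one]
    · intro i _ hi
      by_cases hii0 : i = i0
      · subst hii0
        rw [hvP_i0_coeff, if_neg (by omega), if_neg hjq]
        ring
      · rw [hvP_ne_coeff i hii0, if_neg (fun h => hi (Fin.ext h.symm)), mul_zero]
    · intro h
      exact absurd (mem_univ _) h
  have hP_deg : ∀ c : Fin k → F, (P c).natDegree ≤ k := by
    intro c
    rw [hP_def]
    refine natDegree_sum_le_of_forall_le _ _ ?_
    intro i _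
    refine le_trans (natDegree_mul_le) ?_
    rw [natDegree_C, zero_add]
    by_cases hi : i = i0
    · rw [hi, hvP_i0]
      refine le_trans (natDegree_add_le _ _) ?_
      simp only [natDegree_X_pow]
      refine max_le le_rfl (le_trans (natDegree_mul_le) ?_)
      rw [natDegree_C, zero_add, natDegree_X_pow]
      omega
    · rw [hvP_ne i hi, natDegree_X_pow]
      have := i.isLt
      omega
  have hP_deg' : ∀ c : Fin k → F, c i0 = 0 → (P c).natDegree ≤ k - 1 := by
    intro c hc
    rw [hP_def]
    refine natDegree_sum_le_of_forall_le _ _ ?_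
    intro i _
    by_cases hi : i = i0
    · rw [hi, hc]
      simp
    · refine le_trans (natDegree_mul_le) ?_
      rw [natDegree_C, zero_add, hvP_ne i hi, natDegree_X_pow]
      have h1 := i.isLt
      have h2 := hne_i0 i hi
      omega
  have hP_zero : ∀ c : Fin k → F, P c = 0 → c = 0 := by
    intro c hPc
    funext i
    by_cases hi : i = i0
    · rw [hi]
      have h := hP_coeff_k c
      rw [hPc, coeff_zero] at h
      exact h.symm
    · have h := hP_coeff_lt c i i.isLt (hne_i0 i hi)
      rw [hPc, coeff_zero] at h
      simpa using h.symm
  -- the witness coefficient vector c₀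
  set c₀ : Fin k → F := fun i => if (i:ℕ) = q-1 then 1 else f.coeff (i:ℕ) with hc₀_def
  have hc₀i0 : c₀ i0 = 1 := by
    rw [hc₀_def, hi0_def]
    exact if_pos rfl
  have hc₀at : ∀ (j : ℕ) (hj : j < k), j ≠ q-1 → c₀ ⟨j, hj⟩ = f.coeff j := by
    intro j hj hjq
    rw [hc₀_def]
    exact if_neg hjq
  have hPc₀ : P c₀ = f := by
    apply Polynomial.ext
    intro j
    rcases lt_trichotomy j k with hjk | hjk | hjk
    · by_cases hjq : j = q-1
      · subst hjq
        rw [hP_coeff_q1, hc₀i0, mul_one, ht_def]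
      · rw [hP_coeff_lt c₀ j hjk hjq, hc₀at j hjk hjq]
    · subst hjk
      rw [hP_coeff_k, hc₀i0]
      have h1 : f.coeff f.natDegree = 1 := hfmonic.coeff_natDegree
      rw [hfdeg] at h1
      rw [h1]
    · rw [coeff_eq_zero_of_natDegree_lt (lt_of_le_of_lt (hP_deg c₀) hjk),
        coeff_eq_zero_of_natDegree_lt (by omega)]
  have hc₀0 : c₀ ≠ 0 := fun h => by
    have h1 := hc₀i0
    rw [h] at h1
    simp at h1
  -- the linear code map
  set W : (Fin k → F) → Option F → F :=
    fun c o => Option.elim o (γ * c i0) (fun x => (P c).eval x) with hW_def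
  set Φf : (Fin k → F) → Fin (q^2+1) → F := fun c j => W c (σ j) with hΦf_def
  have hPadd : ∀ c c' : Fin k → F, P (c + c') = P c + P c' := by
    intro c c'
    rw [hP_def, ← Finset.sum_add_distrib]
    exact Finset.sum_congr rfl fun i _ => by
      rw [Pi.add_apply, C_add, add_mul]
  have hPsmul : ∀ (a : F) (c : Fin k → F), P (a • c) = C a * P c := by
    intro a c
    rw [hP_def, Finset.mul_sum]
    exact Finset.sum_congr rfl fun i _ => by
      rw [Pi.smul_apply, smul_eq_mul, C_mul, mul_assoc]
  set Φ : (Fin k → F) →ₗ[F] (Fin (q^2+1) → F) :=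
    { toFun := Φf
      map_add' := by
        intro c c'
        funext j
        simp only [hΦf_def, hW_def, Pi.add_apply]
        cases σ j with
        | none => simp only [Option.elim]; ring
        | some x => simp only [Option.elim]; rw [hPadd, eval_add]
      map_smul' := by
        intro a c
        funext j
        simp only [hΦf_def, hW_def, RingHom.id_apply, Pi.smul_apply, smul_eq_mul]
        cases σ j with
        | none => simp only [Option.elim]; ring
        | some x => simp only [Option.elim]; rw [hPsmul, eval_mul, eval_C] } with hΦ_def
  have hΦapp : ∀ c, Φ c = Φf c := fun c => rfl
  -- sum over coordinates = sum over Option F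
  have hsum_opt : ∀ (u : Option F → F),
      ∑ j : Fin (q^2+1), u (σ j) = u none + ∑ x : F, u (some x) := by
    intro u
    rw [Equiv.sum_comp σ u, univ_option, Finset.sum_insertNone]
  -- Gram matrix entries
  have hk2q2 : k ≤ 2*q-2 := hk2
  have hSval : ∀ i i' : Fin k,
      (∑ x : F, (vP i).eval x * ((vP i').eval x)^q)
        = if i = i0 ∧ i' = i0 then ((if k = 2*q-2 then (-1:F) else 0) - t^q * t) else 0 := by
    intro i i'
    have hik : (i:ℕ) ≤ 2*q-2 := by have := i.isLt; omega
    have hik' : (i':ℕ) ≤ 2*q-2 := by have := i'.isLt; omega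
    have hkb : k ≤ 2*q-2 := hk2
    have hq1b : q-1 ≤ 2*q-2 := by omega
    by_cases h1 : i = i0 <;> by_cases h2 : i' = i0
    · rw [if_pos ⟨h1, h2⟩, h1, h2]
      have hev : ∀ x : F, (vP i0).eval x * ((vP i0).eval x)^q
          = x^k * (x^k)^q + t^q * (x^k * (x^(q-1))^q)
            + t * (x^(q-1) * (x^k)^q) + (t^q * t) * (x^(q-1) * (x^(q-1))^q) := by
        intro x
        rw [hvP_i0_eval, frob_add, mul_pow]
        ring
      rw [Finset.sum_congr rfl fun x _ => hev x]
      rw [Finset.sum_add_distrib, Finset.sum_add_distrib, Finset.sum_add_distrib,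
        ← Finset.mul_sum, ← Finset.mul_sum, ← Finset.mul_sum]
      rw [Tval hF hq3 hkb hkb, Tval hF hq3 hkb hq1b, Tval hF hq3 hq1b hkb,
        Tval hF hq3 hq1b hq1b]
      rw [if_congr (show ((k = q-1 ∧ k = q-1) ∨ (k = 2*q-2 ∧ k = 2*q-2)) ↔ k = 2*q-2 by
        constructor
        · rintro (⟨h, _⟩ | ⟨h, _⟩) <;> omega
        · intro h; exact Or.inr ⟨h, h⟩) rfl rfl]
      rw [if_neg (show ¬((k = q-1 ∧ q-1 = q-1) ∨ (k = 2*q-2 ∧ q-1 = 2*q-2)) by omega)]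
      rw [if_neg (show ¬((q-1 = q-1 ∧ k = q-1) ∨ (q-1 = 2*q-2 ∧ k = 2*q-2)) by omega)]
      rw [if_pos (Or.inl ⟨rfl, rfl⟩)]
      ring
    · rw [if_neg (fun h => h2 h.2), h1]
      have hev : ∀ x : F, (vP i0).eval x * ((vP i').eval x)^q
          = x^k * (x^((i':ℕ)))^q + t * (x^(q-1) * (x^((i':ℕ)))^q) := by
        intro x
        rw [hvP_i0_eval, hvP_ne_eval i' h2]
        ring
      rw [Finset.sum_congr rfl fun x _ => hev x]
      rw [Finset.sum_add_distrib, ← Finset.mul_sum]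
      rw [Tval hF hq3 hkb hik', Tval hF hq3 hq1b hik']
      have hi'q : (i':ℕ) ≠ q-1 := hne_i0 i' h2
      have hi'k : (i':ℕ) ≠ 2*q-2 := by have := i'.isLt; omega
      rw [if_neg (show ¬((k = q-1 ∧ (i':ℕ) = q-1) ∨ (k = 2*q-2 ∧ (i':ℕ) = 2*q-2)) from by
        rintro (⟨_, h⟩ | ⟨_, h⟩)
        · exact hi'q h
        · exact hi'k h)]
      rw [if_neg (show ¬((q-1 = q-1 ∧ (i':ℕ) = q-1) ∨ (q-1 = 2*q-2 ∧ (i':ℕ) = 2*q-2)) from by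
        rintro (⟨_, h⟩ | ⟨h, _⟩)
        · exact hi'q h
        · omega)]
      ring
    · rw [if_neg (fun h => h1 h.1), h2]
      have hev : ∀ x : F, (vP i).eval x * ((vP i0).eval x)^q
          = x^((i:ℕ)) * (x^k)^q + t^q * (x^((i:ℕ)) * (x^(q-1))^q) := by
        intro x
        rw [hvP_i0_eval, hvP_ne_eval i h1, frob_add, mul_pow]
        ring
      rw [Finset.sum_congr rfl fun x _ => hev x]
      rw [Finset.sum_add_distrib, ← Finset.mul_sum]
      rw [Tval hF hq3 hik hkb, Tval hF hq3 hik hq1b]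
      have hiq : (i:ℕ) ≠ q-1 := hne_i0 i h1
      have hikk : (i:ℕ) ≠ 2*q-2 := by have := i.isLt; omega
      rw [if_neg (show ¬(((i:ℕ) = q-1 ∧ k = q-1) ∨ ((i:ℕ) = 2*q-2 ∧ k = 2*q-2)) from by
        rintro (⟨h, _⟩ | ⟨h, _⟩)
        · exact hiq h
        · exact hikk h)]
      rw [if_neg (show ¬(((i:ℕ) = q-1 ∧ q-1 = q-1) ∨ ((i:ℕ) = 2*q-2 ∧ q-1 = 2*q-2)) from by
        rintro (⟨h, _⟩ | ⟨h, _⟩)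
        · exact hiq h
        · exact hikk h)]
      ring
    · rw [if_neg (fun h => h1 h.1)]
      have hev : ∀ x : F, (vP i).eval x * ((vP i').eval x)^q
          = x^((i:ℕ)) * (x^((i':ℕ)))^q := by
        intro x
        rw [hvP_ne_eval i h1, hvP_ne_eval i' h2]
      rw [Finset.sum_congr rfl fun x _ => hev x]
      rw [Tval hF hq3 hik hik']
      have hiq : (i:ℕ) ≠ q-1 := hne_i0 i h1
      have hikk : (i:ℕ) ≠ 2*q-2 := by have := i.isLt; omega
      rw [if_neg (show ¬(((i:ℕ) = q-1 ∧ (i':ℕ) = q-1) ∨ ((i:ℕ) = 2*q-2 ∧ (i':ℕ) = 2*q-2)) from by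
        rintro (⟨h, _⟩ | ⟨h, _⟩)
        · exact hiq h
        · exact hikk h)]
  -- self-orthogonality (Gram computation)
  have gram : ∀ c c' : Fin k → F, hermInner q (Φf c) (Φf c') = 0 := by
    intro c c'
    unfold hermInner
    have hstep : ∀ j : Fin (q^2+1), Φf c j * (Φf c' j)^q
        = (fun o => W c o * (W c' o)^q) (σ j) := fun j => rfl
    rw [Finset.sum_congr rfl fun j _ => hstep j]
    rw [hsum_opt (fun o => W c o * (W c' o)^q)]
    have hnone : W c none * (W c' none)^q = (c i0 * (c' i0)^q) * (γ^q * γ) := by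
      rw [hW_def]
      simp only [Option.elim]
      rw [mul_pow]
      ring
    have hsome : ∀ x : F, W c (some x) * (W c' (some x))^q
        = ∑ i : Fin k, ∑ i' : Fin k,
            (c i * (c' i')^q) * ((vP i).eval x * ((vP i').eval x)^q) := by
      intro x
      rw [hW_def]
      simp only [Option.elim]
      rw [hP_eval, hP_eval, frob_sum (fun i => c' i * (vP i).eval x)]
      rw [Finset.sum_mul_sum]
      refine Finset.sum_congr rfl fun i _ => Finset.sum_congr rfl fun i' _ => ?_
      rw [mul_pow]
      ring
    rw [hnone, Finset.sum_congr rfl fun x _ => hsome x]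
    rw [Finset.sum_comm]
    have hswap : ∀ i : Fin k, (∑ x : F, ∑ i' : Fin k,
        (c i * (c' i')^q) * ((vP i).eval x * ((vP i').eval x)^q))
        = ∑ i' : Fin k, (c i * (c' i')^q) * (∑ x : F, (vP i).eval x * ((vP i').eval x)^q) := by
      intro i
      rw [Finset.sum_comm]
      exact Finset.sum_congr rfl fun i' _ => by rw [← Finset.mul_sum]
    rw [Finset.sum_congr rfl fun i _ => hswap i]
    have hcollapse : ∀ i : Fin k, (∑ i' : Fin k,
        (c i * (c' i')^q) * (∑ x : F, (vP i).eval x * ((vP i').eval x)^q))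
        = if i = i0 then (c i * (c' i0)^q) * ((if k = 2*q-2 then (-1:F) else 0) - t^q * t)
          else 0 := by
      intro i
      by_cases hi : i = i0
      · rw [if_pos hi]
        rw [Finset.sum_eq_single i0]
        · rw [hSval i i0, if_pos ⟨hi, rfl⟩]
        · intro i' _ hi'
          rw [hSval i i', if_neg (fun h => hi' h.2), mul_zero]
        · intro h
          exact absurd (mem_univ _) h
      · rw [if_neg hi]
        refine Finset.sum_eq_zero fun i' _ => ?_
        rw [hSval i i', if_neg (fun h => hi h.1), mul_zero]
    rw [Finset.sum_congr rfl fun i _ => hcollapse i]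
    rw [Finset.sum_ite_eq' univ i0 (fun i => (c i * (c' i0)^q)
      * ((if k = 2*q-2 then (-1:F) else 0) - t^q * t))]
    rw [if_pos (mem_univ i0)]
    have : (c i0 * (c' i0)^q) * (γ^q * γ)
        + (c i0 * (c' i0)^q) * ((if k = 2*q-2 then (-1:F) else 0) - t^q * t)
        = (c i0 * (c' i0)^q)
          * (γ^q * γ + ((if k = 2*q-2 then (-1:F) else 0) - t^q * t)) := by ring
    rw [this, hγkey, mul_zero]
  -- injectivity
  have hΦinj0 : ∀ c : Fin k → F, Φf c = 0 → c = 0 := by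
    intro c hc
    have hev : ∀ x : F, (P c).eval x = 0 := by
      intro x
      have h1 := congrFun hc (σ.symm (some x))
      rw [hΦf_def] at h1
      simp only [Equiv.apply_symm_apply] at h1
      rw [hW_def] at h1
      simpa using h1
    have hP0 : P c = 0 := by
      by_contra hne
      have h1 : (univ.filter fun x : F => (P c).eval x = 0) = univ :=
        Finset.filter_true_of_mem fun x _ => hev x
      have h2 := card_eval_zero_le (P c) hne
      rw [h1, card_univ, hF] at h2
      have h3 := hP_deg c
      omega
    exact hP_zero c hP0
  have hΦinj : Function.Injective Φ := by
    rw [← LinearMap.ker_eq_bot]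
    apply (Submodule.eq_bot_iff _).mpr
    intro c hc
    exact hΦinj0 c (by simpa [hΦapp] using hc)
  -- Hamming weight description
  have hnorm : ∀ c : Fin k → F, hammingNorm (Φf c)
      = (if γ * c i0 ≠ 0 then 1 else 0)
        + (univ.filter fun x : F => (P c).eval x ≠ 0).card := by
    intro c
    show (univ.filter fun j => Φf c j ≠ 0).card = _
    rw [Finset.card_filter, Finset.card_filter]
    have hstep : ∀ j : Fin (q^2+1), (if Φf c j ≠ 0 then 1 else 0)
        = (fun o => if W c o ≠ 0 then 1 else 0) (σ j) := fun j => rfl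
    rw [Finset.sum_congr rfl fun j _ => hstep j]
    rw [Equiv.sum_comp σ (fun o => if W c o ≠ 0 then 1 else 0), univ_option,
      Finset.sum_insertNone]
    rfl
  -- number of zeros of the witness polynomial
  have hwzeros : (univ.filter fun x : F => f.eval x = 0).card = k := by
    have hset : (univ.filter fun x : F => f.eval x = 0) = nthRootsFinset d (1:F) ∪ B := by
      ext x
      simp only [mem_filter, mem_univ, true_and, mem_union]
      rw [hf_def, eval_mul, mul_eq_zero]
      constructor
      · rintro (h | h)
        · left
          rw [mem_nthRootsFinset hd_pos (1:F)]
          simp only [eval_sub, eval_pow, eval_X, eval_one] at h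
          exact sub_eq_zero.mp h
        · right
          rw [hG_def, eval_prod, Finset.prod_eq_zero_iff] at h
          obtain ⟨b, hb, hbx⟩ := h
          simp only [eval_sub, eval_X, eval_C, sub_eq_zero] at hbx
          rwa [hbx]
      · rintro (h | h)
        · left
          rw [mem_nthRootsFinset hd_pos (1:F)] at h
          simp only [eval_sub, eval_pow, eval_X, eval_one]
          rw [h, sub_self]
        · right
          rw [hG_def, eval_prod]
          refine Finset.prod_eq_zero h ?_
          simp
    rw [hset]
    have hdisj : Disjoint (nthRootsFinset d (1:F)) B := by
      rw [Finset.disjoint_right]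
      intro b hb
      exact hBroot b hb
    rw [Finset.card_union_of_disjoint hdisj, hζ.card_nthRootsFinset, hBcard]
    omega
  -- conclusion
  refine ⟨LinearMap.range Φ, ?_, ?_, ?_⟩
  · -- self-orthogonal
    intro x hx
    obtain ⟨c, rfl⟩ := hx
    intro y hy
    obtain ⟨c', rfl⟩ := hy
    exact gram c' c
  · rw [LinearMap.finrank_range_of_inj hΦinj]
    simp [Module.finrank_pi]
  · constructor
    · -- the minimum distance is attained
      refine ⟨Φf c₀, ⟨c₀, rfl⟩, ?_, ?_⟩
      · intro h
        exact hc₀0 (hΦinj0 c₀ h)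
      · rw [hnorm c₀, hPc₀]
        rw [if_pos (mul_ne_zero hγ0 (by rw [hc₀i0]; exact one_ne_zero))]
        have hsplit := Finset.card_filter_add_card_filter_not
          (s := (univ : Finset F)) (p := fun x : F => f.eval x = 0)
        rw [card_univ, hF, hwzeros] at hsplit
        have : (univ.filter fun x : F => f.eval x ≠ 0).card = q^2 - k := by
          have : (univ.filter fun x : F => ¬ (f.eval x = 0)).card = q^2 - k := by omega
          simpa using this
        rw [this]
        omega
    · -- lower bound
      rintro w ⟨x, hxC, hx0, rfl⟩
      obtain ⟨c, rfl⟩ := hxC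
      rw [hΦapp] at hx0 ⊢
      have hΦf0 : Φf 0 = 0 := by rw [← hΦapp]; exact map_zero Φ
      have hc0 : c ≠ 0 := fun h => hx0 (h ▸ hΦf0)
      rw [hnorm c]
      have hPcne : P c ≠ 0 := fun h => hc0 (hP_zero c h)
      have hzle := card_eval_zero_le (P c) hPcne
      have hsplit := Finset.card_filter_add_card_filter_not
        (s := (univ : Finset F)) (p := fun x : F => (P c).eval x = 0)
      rw [card_univ, hF] at hsplit
      have hne_card : (univ.filter fun x : F => (P c).eval x ≠ 0).card
          = q^2 - (univ.filter fun x : F => (P c).eval x = 0).card := by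
        have : (univ.filter fun x : F => ¬ ((P c).eval x = 0)).card
            = q^2 - (univ.filter fun x : F => (P c).eval x = 0).card := by omega
        simpa using this
      by_cases hci0 : c i0 = 0
      · have hdeg := hP_deg' c hci0
        have : (univ.filter fun x : F => (P c).eval x = 0).card ≤ k - 1 :=
          le_trans hzle hdeg
        rw [hne_card]
        omega
      · rw [if_pos (mul_ne_zero hγ0 hci0)]
        have : (univ.filter fun x : F => (P c).eval x = 0).card ≤ k :=
          le_trans hzle (hP_deg c)
        rw [hne_card]
        omega
end

section
/- Let q be an odd prime power. Then: (i) there exists an almost MDS Hermitian self-orthogonal linear code over F_{q^2} with parameters [2(q+1)+2, 4, 2q]; and (ii) for every integer i with 2 ≤ i ≤ q there exists a Hermitian self-orthogonal linear code over F_{q^2} with parameters [2(q+1)+i, 2+i, d] for some d ≥ 2q+2−i. -/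
open Finset Polynomial

section Helpers
variable {F : Type} [Field F] [DecidableEq F]

lemma hammingNorm_comp_equiv {α β : Type} [Fintype α] [Fintype β]
    (e : α ≃ β) (x : β → F) : hammingNorm (x ∘ e) = hammingNorm x := by
  simp only [hammingNorm]
  apply Finset.card_nbij (fun a => e a)
  · intro a ha
    simp only [Finset.mem_filter, Finset.mem_univ, true_and] at ha ⊢
    simpa using ha
  · intro a _ b _ hab
    exact e.injective hab
  · intro b hb
    refine ⟨e.symm b, ?_, by simp⟩
    simp only [Finset.coe_filter, Set.mem_setOf_eq, Finset.mem_univ, true_and,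
      Function.comp_apply, Equiv.apply_symm_apply] at hb ⊢
    exact hb

lemma card_roots_filter {J : Type} [Fintype J] (P : J → F) (hP : Function.Injective P)
    (f : Polynomial F) (hf : f ≠ 0) :
    (Finset.univ.filter fun j => Polynomial.eval (P j) f = 0).card ≤ f.natDegree := by
  classical
  have h1 : ((Finset.univ.filter fun j => Polynomial.eval (P j) f = 0).image P)
      ⊆ f.roots.toFinset := by
    intro x hx
    simp only [Finset.mem_image, Finset.mem_filter] at hx
    obtain ⟨j, ⟨-, hj⟩, rfl⟩ := hx
    simp only [Multiset.mem_toFinset, mem_roots, hf, IsRoot.def, hj, ne_eq,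
      not_false_eq_true, and_self]
  calc (Finset.univ.filter fun j => Polynomial.eval (P j) f = 0).card
      = ((Finset.univ.filter fun j => Polynomial.eval (P j) f = 0).image P).card :=
        (Finset.card_image_of_injective _ hP).symm
    _ ≤ f.roots.toFinset.card := Finset.card_le_card h1
    _ ≤ Multiset.card f.roots := f.roots.toFinset_card_le
    _ ≤ f.natDegree := f.card_roots'

end Helpers

lemma herm_key (q : ℕ) (hq : IsPrimePow q) (hodd : Odd q)
    (F : Type) [Field F] [Fintype F] [DecidableEq F]
    (hF : Fintype.card F = q ^ 2) (i : ℕ) (h2i : 2 ≤ i) (hiq : i ≤ q) :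
    ∃ C : Submodule F (Fin (2 * (q + 1) + i) → F),
      (∀ x ∈ C, ∀ y ∈ C, hermInner q x y = 0) ∧
      Module.finrank F C = 2 + i ∧
      (∀ x ∈ C, x ≠ 0 → 2 * q + 2 - i ≤ hammingNorm x) ∧
      (∃ x, x ∈ C ∧ x ≠ 0) ∧
      (∃ x, x ∈ C ∧ x ≠ 0 ∧ hammingNorm x = 2 * q) := by
  classical
  obtain ⟨p0, k, hp0, hk, hpk0⟩ := hq
  obtain ⟨p, hchar⟩ := CharP.exists F
  haveI := hchar
  obtain ⟨n, pp, hcard⟩ := FiniteField.card F p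
  have hp0p : p0 = p := by
    have h1 : p ∣ p0 ^ (2 * k) := by
      have h2 : p ∣ p ^ (n : ℕ) := dvd_pow_self _ n.pos.ne'
      rw [← hcard, hF, ← hpk0, ← pow_mul, mul_comm k 2] at h2
      exact h2
    have h3 := pp.prime.dvd_of_dvd_pow h1
    exact ((Nat.prime_dvd_prime_iff_eq pp (Nat.prime_iff.mpr hp0)).mp h3).symm
  have hpk : p ^ k = q := by rw [← hp0p]; exact hpk0
  have hp2 : p ≠ 2 := by
    intro h
    have : Even q := by
      rw [← hpk, h]
      exact (Nat.even_pow.mpr ⟨even_two, hk.ne'⟩)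
    exact (Nat.not_even_iff_odd.mpr hodd) this
  have hp3 : 3 ≤ p := by have := pp.two_le; omega
  have hqodd : q % 2 = 1 := Nat.odd_iff.mp hodd
  have hq3 : 3 ≤ q := by
    calc 3 ≤ p := hp3
    _ ≤ p ^ k := Nat.le_self_pow hk.ne' p
    _ = q := hpk
  have hqF : (q : F) = 0 := by
    rw [← hpk, Nat.cast_pow, CharP.cast_eq_zero F p, zero_pow hk.ne']
  have hq1F : ((q + 1 : ℕ) : F) = 1 := by push_cast; rw [hqF]; ring
  have h2F : (2 : F) ≠ 0 := by
    intro h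
    have h' : ((2 : ℕ) : F) = 0 := by exact_mod_cast h
    rw [CharP.cast_eq_zero_iff F p 2] at h'
    have := Nat.le_of_dvd (by norm_num) h'
    omega
  have hm1 : (-1 : F) ≠ 1 := by
    intro h; apply h2F; linear_combination -h
  haveI := Fact.mk pp
  have hcardU : Fintype.card Fˣ = q ^ 2 - 1 := by rw [Fintype.card_units, hF]
  obtain ⟨g, hg⟩ := IsCyclic.exists_generator (α := Fˣ)
  have ordg : orderOf g = q ^ 2 - 1 := by
    rw [orderOf_eq_card_of_forall_mem_zpowers hg, Nat.card_eq_fintype_card, hcardU]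
  have hq21 : (q + 1) * (q - 1) = q ^ 2 - 1 := by
    rcases q with - | m
    · omega
    · simp only [Nat.add_sub_cancel]
      have e1 : (m + 1 + 1) * m + 1 = (m + 1) ^ 2 := by ring
      omega
  have normSolve : ∀ t : Fˣ, t ^ (q - 1) = 1 → ∃ s : Fˣ, s ^ (q + 1) = t := by
    intro t ht
    obtain ⟨a, ha⟩ := mem_powers_iff_mem_zpowers.mpr (hg t)
    change g ^ a = t at ha
    rw [← ha, ← pow_mul] at ht
    have hdvd : (q + 1) * (q - 1) ∣ a * (q - 1) := by
      rw [hq21, ← ordg]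
      exact orderOf_dvd_of_pow_eq_one ht
    have hdvd2 : (q + 1) ∣ a := by
      have hpos : 0 < q - 1 := by omega
      exact (Nat.mul_dvd_mul_iff_right hpos).mp hdvd
    exact ⟨g ^ (a / (q + 1)), by rw [← pow_mul, Nat.div_mul_cancel hdvd2, ha]⟩
  set ζ : Fˣ := g ^ (q - 1) with hζdef
  have ordζ : orderOf ζ = q + 1 := by
    rw [hζdef, orderOf_pow, ordg, ← hq21]
    have hgcd : ((q + 1) * (q - 1)).gcd (q - 1) = q - 1 :=
      Nat.gcd_eq_right (dvd_mul_left (q - 1) (q + 1))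
    rw [hgcd, Nat.mul_div_cancel _ (by omega : 0 < q - 1)]
  have hζpow : ∀ N : ℕ, ζ ^ N = 1 ↔ (q + 1) ∣ N := by
    intro N
    rw [← ordζ, ← orderOf_dvd_iff_pow_eq_one]
  -- η
  have hevq1 : Even (q - 1) := by
    obtain ⟨m, hm⟩ := hodd; exact ⟨m, by omega⟩
  obtain ⟨η, hη⟩ := normSolve (-1) (hevq1.neg_one_pow)
  -- c
  have h2p : (2 : F) ^ p = 2 := by
    have h := map_ofNat (frobenius F p) 2
    rwa [frobenius_def] at h
  have h2pow : (2 : F) ^ q = 2 := by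
    rw [← hpk]
    have hall : ∀ m : ℕ, (2 : F) ^ p ^ m = 2 := by
      intro m
      induction m with
      | zero => simp
      | succ m ih => rw [pow_succ, pow_mul, ih, h2p]
    exact hall k
  have hm2q : (-2 : F) ^ q = -2 := by rw [hodd.neg_pow, h2pow]
  have hm2 : (-2 : F) ≠ 0 := by simpa using h2F
  set u2 : Fˣ := Units.mk0 (-2 : F) hm2 with hu2def
  have hu2 : u2 ^ (q - 1) = 1 := by
    apply Units.ext
    rw [Units.val_pow_eq_pow_val, Units.val_one, hu2def, Units.val_mk0]
    have hq1 : q - 1 + 1 = q := by omega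
    have h := hm2q
    rw [← hq1, pow_succ] at h
    exact mul_right_cancel₀ hm2 (by rw [h, one_mul])
  obtain ⟨c, hc⟩ := normSolve u2 hu2
  have hζF : ((ζ : F)) ^ (q + 1) = 1 := by
    rw [← Units.val_pow_eq_pow_val, (hζpow (q + 1)).mpr dvd_rfl, Units.val_one]
  have hηF : ((η : F)) ^ (q + 1) = -1 := by
    rw [← Units.val_pow_eq_pow_val, hη]; simp
  have hcF : ((c : F)) ^ (q + 1) = -2 := by
    rw [← Units.val_pow_eq_pow_val, hc, hu2def, Units.val_mk0]
  -- geometric sums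
  have gsum : ∀ N : ℕ, (∑ j ∈ Finset.range (q + 1), ((ζ : F) ^ N) ^ j)
      = if (q + 1) ∣ N then ((q + 1 : ℕ) : F) else 0 := by
    intro N
    by_cases hN : (q + 1) ∣ N
    · rw [if_pos hN]
      have h1 : ((ζ : F)) ^ N = 1 := by
        rw [← Units.val_pow_eq_pow_val, (hζpow N).mpr hN, Units.val_one]
      simp [h1]
    · rw [if_neg hN]
      have hne : ((ζ : F)) ^ N ≠ 1 := by
        intro h
        apply hN
        rw [← hζpow N]
        exact Units.ext (by rw [Units.val_pow_eq_pow_val, h, Units.val_one])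
      rw [geom_sum_eq hne]
      have h2 : (((ζ : F)) ^ N) ^ (q + 1) = 1 := by
        rw [← pow_mul, mul_comm, pow_mul, hζF, one_pow]
      rw [h2]
      simp
  -- the code
  have hζval : ∀ N : ℕ, ((ζ : F)) ^ N = ((ζ ^ N : Fˣ) : F) := fun N =>
    (Units.val_pow_eq_pow_val ζ N).symm
  set bar : (Fin (i + 2) → F) → ℕ → F :=
    fun A n => if h : n < i + 2 then A ⟨n, h⟩ else 0 with hbar
  set blockn : F → (Fin (i + 2) → F) → ℕ → F :=
    fun u A j => ∑ m ∈ Finset.range (i + 2), bar A m * (u * (ζ : F) ^ j) ^ m with hblockn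
  -- Frobenius
  haveI : ExpChar F p := inferInstance
  have hφ : ∀ y : F, y ^ q = iterateFrobenius F p k y := by
    intro y; rw [iterateFrobenius_def, hpk]
  have powq_sum : ∀ (s : Finset ℕ) (f : ℕ → F),
      (∑ b ∈ s, f b) ^ q = ∑ b ∈ s, (f b) ^ q := by
    intro s f
    rw [hφ, map_sum]
    exact Finset.sum_congr rfl fun b _ => (hφ (f b)).symm
  have blocksum : ∀ (u : F) (A B : Fin (i + 2) → F),
      (∑ j ∈ Finset.range (q + 1), blockn u A j * (blockn u B j) ^ q)
      = ∑ a ∈ Finset.range (i + 2), ∑ b ∈ Finset.range (i + 2),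
          bar A a * (bar B b) ^ q * u ^ (a + q * b) *
            (if (q + 1) ∣ (a + q * b) then ((q + 1 : ℕ) : F) else 0) := by
    intro u A B
    have step1 : ∀ j : ℕ, blockn u A j * (blockn u B j) ^ q
        = ∑ a ∈ Finset.range (i + 2), ∑ b ∈ Finset.range (i + 2),
            (bar A a * (bar B b) ^ q * u ^ (a + q * b)) * (((ζ : F) ^ (a + q * b)) ^ j) := by
      intro j
      rw [hblockn]
      simp only []
      rw [powq_sum, Finset.sum_mul_sum]
      refine Finset.sum_congr rfl fun a _ => Finset.sum_congr rfl fun b _ => ?_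
      rw [mul_pow (bar B b)]
      have hz : (u * (ζ : F) ^ j) ^ a * ((u * (ζ : F) ^ j) ^ b) ^ q
          = u ^ (a + q * b) * (((ζ : F) ^ (a + q * b)) ^ j) := by
        rw [← pow_mul, ← pow_add, show a + b * q = a + q * b from by ring, mul_pow,
          ← pow_mul, mul_comm j (a + q * b), pow_mul]
      calc (bar A a * (u * (ζ : F) ^ j) ^ a) * ((bar B b) ^ q * ((u * (ζ : F) ^ j) ^ b) ^ q)
          = (bar A a * (bar B b) ^ q) *
            ((u * (ζ : F) ^ j) ^ a * ((u * (ζ : F) ^ j) ^ b) ^ q) := by ring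
        _ = _ := by rw [hz]; ring
    simp_rw [step1]
    rw [Finset.sum_comm]
    refine Finset.sum_congr rfl fun a _ => ?_
    rw [Finset.sum_comm]
    refine Finset.sum_congr rfl fun b _ => ?_
    rw [← Finset.mul_sum, gsum]
  have extraEq : ∀ A B : Fin (i + 2) → F,
      (∑ j ∈ Finset.range i, ((c : F) * bar A (2 * j)) * (((c : F) * bar B (2 * j)) ^ q))
      = ∑ a ∈ Finset.range (i + 2),
          (if Even a then (-2 : F) * (bar A a * (bar B a) ^ q) else 0) := by
    intro A B
    have hterm : ∀ m : ℕ, ((c : F) * bar A m) * (((c : F) * bar B m) ^ q)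
        = (-2 : F) * (bar A m * (bar B m) ^ q) := by
      intro m
      rw [mul_pow]
      calc ((c : F) * bar A m) * ((c : F) ^ q * (bar B m) ^ q)
          = ((c : F) ^ (q + 1)) * (bar A m * (bar B m) ^ q) := by rw [pow_succ]; ring
        _ = _ := by rw [hcF]
    simp_rw [hterm]
    rw [← Finset.sum_filter]
    have hGz : ∀ m : ℕ, i + 2 ≤ m → (-2 : F) * (bar A m * (bar B m) ^ q) = 0 := by
      intro m hm
      have h0 : bar A m = 0 := dif_neg (by omega)
      rw [h0]; ring
    have hsub : (∑ a ∈ (Finset.range (i + 2)).filter (fun a => Even a),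
          (-2 : F) * (bar A a * (bar B a) ^ q))
        = ∑ a ∈ (Finset.range (2 * i)).filter (fun a => Even a),
          (-2 : F) * (bar A a * (bar B a) ^ q) := by
      apply Finset.sum_subset
      · exact Finset.filter_subset_filter _ (Finset.range_subset_range.mpr (by omega))
      · intro x hx hnx
        simp only [Finset.mem_filter, Finset.mem_range] at hx hnx
        apply hGz
        by_contra hlt
        push_neg at hlt
        exact hnx ⟨by omega, hx.2⟩
    rw [hsub]
    symm
    refine Finset.sum_nbij' (fun m => m / 2) (fun l => 2 * l) ?_ ?_ ?_ ?_ ?_ <;>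
      (intro x hx; simp only [Finset.mem_filter, Finset.mem_range, Nat.even_iff] at hx ⊢)
    · omega
    · omega
    · omega
    · omega
    · have h2x : 2 * (x / 2) = x := by omega
      rw [h2x]
  set cw0 : (Fin (i + 2) → F) → (Fin (q + 1) ⊕ (Fin (q + 1) ⊕ Fin i)) → F :=
    fun A => Sum.elim (fun j => blockn 1 A (j : ℕ))
      (Sum.elim (fun j => blockn ((η : F)) A (j : ℕ))
        (fun j => (c : F) * bar A (2 * (j : ℕ)))) with hcw0
  have hKey : ∀ A B : Fin (i + 2) → F, ∀ a ∈ Finset.range (i + 2), ∀ b ∈ Finset.range (i + 2),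
      bar A a * (bar B b) ^ q * (1 : F) ^ (a + q * b) *
          (if (q + 1) ∣ (a + q * b) then ((q + 1 : ℕ) : F) else 0)
        + bar A a * (bar B b) ^ q * ((η : F)) ^ (a + q * b) *
          (if (q + 1) ∣ (a + q * b) then ((q + 1 : ℕ) : F) else 0)
      = if b = a then (if Even a then 2 * (bar A a * (bar B a) ^ q) else 0) else 0 := by
    intro A B a ha b hb
    simp only [one_pow, one_mul]
    by_cases hd : (q + 1) ∣ (a + q * b)
    · rw [if_pos hd, hq1F]
      by_cases hab : b = a
      · subst hab
        have he : ((η : F)) ^ (b + q * b) = (-1 : F) ^ b := by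
          rw [show b + q * b = (q + 1) * b from by ring, pow_mul, hηF]
        rw [if_pos rfl, he]
        by_cases hev : Even b
        · rw [if_pos hev, hev.neg_one_pow]; ring
        · rw [if_neg hev, (Nat.not_even_iff_odd.mp hev).neg_one_pow]; ring
      · rw [if_neg hab]
        have hale : a ≤ i + 1 := by
          have := Finset.mem_range.mp ha; omega
        have hble : b ≤ i + 1 := by
          have := Finset.mem_range.mp hb; omega
        have hcase : (a = 0 ∧ b = q + 1) ∨ (a = q + 1 ∧ b = 0) := by
          rcases Nat.lt_or_ge a b with h | h
          · left
            have h1 : (q + 1) ∣ (q * b + b) := ⟨b, by ring⟩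
            have h2 := Nat.dvd_sub h1 hd
            have h3 : (q * b + b) - (a + q * b) = b - a := by omega
            rw [h3] at h2
            have h4 := Nat.le_of_dvd (by omega) h2
            omega
          · right
            have hba : b < a := by omega
            have h1 : (q + 1) ∣ (q * b + b) := ⟨b, by ring⟩
            have h2 := Nat.dvd_sub hd h1
            have h3 : (a + q * b) - (q * b + b) = a - b := by omega
            rw [h3] at h2
            have h4 := Nat.le_of_dvd (by omega) h2
            omega
        rcases hcase with ⟨ha0, hb1⟩ | ⟨ha1, hb0⟩
        · subst ha0; subst hb1
          have he : ((η : F)) ^ (0 + q * (q + 1)) = -1 := by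
            rw [zero_add, show q * (q + 1) = (q + 1) * q from by ring, pow_mul, hηF,
              hodd.neg_one_pow]
          rw [he]; ring
        · subst ha1; subst hb0
          have he : ((η : F)) ^ ((q + 1) + q * 0) = -1 := by
            rw [mul_zero, add_zero, hηF]
          rw [he]; ring
    · rw [if_neg hd]
      have hab : ¬(b = a) := by
        intro h; subst h; exact hd ⟨b, by ring⟩
      rw [if_neg hab]; ring
  have hso : ∀ A B : Fin (i + 2) → F,
      (∑ x : Fin (q + 1) ⊕ (Fin (q + 1) ⊕ Fin i), cw0 A x * (cw0 B x) ^ q) = 0 := by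
    intro A B
    rw [Fintype.sum_sum_type, Fintype.sum_sum_type]
    simp only [hcw0, Sum.elim_inl, Sum.elim_inr]
    rw [Fin.sum_univ_eq_sum_range (fun j => blockn 1 A j * (blockn 1 B j) ^ q),
      Fin.sum_univ_eq_sum_range (fun j => blockn ((η : F)) A j * (blockn ((η : F)) B j) ^ q),
      Fin.sum_univ_eq_sum_range (fun j => ((c : F) * bar A (2 * j)) * (((c : F) * bar B (2 * j)) ^ q))]
    rw [blocksum 1 A B, blocksum ((η : F)) A B, extraEq A B]
    rw [← add_assoc, ← Finset.sum_add_distrib]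
    have hmid : ∀ a ∈ Finset.range (i + 2),
        ((∑ b ∈ Finset.range (i + 2), bar A a * (bar B b) ^ q * (1 : F) ^ (a + q * b) *
            (if (q + 1) ∣ (a + q * b) then ((q + 1 : ℕ) : F) else 0))
          + ∑ b ∈ Finset.range (i + 2), bar A a * (bar B b) ^ q * ((η : F)) ^ (a + q * b) *
            (if (q + 1) ∣ (a + q * b) then ((q + 1 : ℕ) : F) else 0))
        = (if Even a then 2 * (bar A a * (bar B a) ^ q) else 0) := by
      intro a ha
      rw [← Finset.sum_add_distrib]
      rw [Finset.sum_congr rfl (fun b hb => hKey A B a ha b hb)]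
      rw [Finset.sum_ite_eq' (Finset.range (i + 2)) a
        (fun _ => if Even a then 2 * (bar A a * (bar B a) ^ q) else 0)]
      rw [if_pos ha]
    rw [Finset.sum_congr rfl hmid, ← Finset.sum_add_distrib]
    apply Finset.sum_eq_zero
    intro a _
    by_cases hev : Even a
    · rw [if_pos hev, if_pos hev]; ring
    · rw [if_neg hev, if_neg hev]; ring
  -- linearity
  have bar_add : ∀ (A B : Fin (i + 2) → F) (n : ℕ), bar (A + B) n = bar A n + bar B n := by
    intro A B n
    rw [hbar]
    by_cases h : n < i + 2
    · simp only [dif_pos h, Pi.add_apply]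
    · simp only [dif_neg h, add_zero]
  have bar_smul : ∀ (t : F) (A : Fin (i + 2) → F) (n : ℕ), bar (t • A) n = t * bar A n := by
    intro t A n
    rw [hbar]
    by_cases h : n < i + 2
    · simp only [dif_pos h, Pi.smul_apply, smul_eq_mul]
    · simp only [dif_neg h, mul_zero]
  have blockn_add : ∀ (u : F) A B (j : ℕ), blockn u (A + B) j = blockn u A j + blockn u B j := by
    intro u A B j
    rw [hblockn]
    simp only []
    rw [← Finset.sum_add_distrib]
    exact Finset.sum_congr rfl fun m _ => by rw [bar_add, add_mul]
  have blockn_smul : ∀ (u t : F) A (j : ℕ), blockn u (t • A) j = t * blockn u A j := by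
    intro u t A j
    rw [hblockn]
    simp only []
    rw [Finset.mul_sum]
    exact Finset.sum_congr rfl fun m _ => by rw [bar_smul, mul_assoc]
  set cw : (Fin (i + 2) → F) →ₗ[F] ((Fin (q + 1) ⊕ (Fin (q + 1) ⊕ Fin i)) → F) :=
    { toFun := cw0
      map_add' := by
        intro A B
        funext x
        rcases x with j | j | j
        · simp only [hcw0, Sum.elim_inl, Pi.add_apply, blockn_add]
        · simp only [hcw0, Sum.elim_inl, Sum.elim_inr, Pi.add_apply, blockn_add]
        · simp only [hcw0, Sum.elim_inr, Pi.add_apply, bar_add]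
          ring
      map_smul' := by
        intro t A
        funext x
        rcases x with j | j | j
        · simp only [hcw0, Sum.elim_inl, Pi.smul_apply, smul_eq_mul, blockn_smul,
            RingHom.id_apply]
        · simp only [hcw0, Sum.elim_inl, Sum.elim_inr, Pi.smul_apply, smul_eq_mul,
            blockn_smul, RingHom.id_apply]
        · simp only [hcw0, Sum.elim_inr, Pi.smul_apply, smul_eq_mul, bar_smul,
            RingHom.id_apply]
          ring } with hcw
  -- evaluation points
  set P : (Fin (q + 1) ⊕ Fin (q + 1)) → F :=
    Sum.elim (fun j => (ζ : F) ^ (j : ℕ)) (fun j => (η : F) * (ζ : F) ^ (j : ℕ)) with hP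
  have hval1 : ∀ N : ℕ, (((ζ : F)) ^ N) ^ (q + 1) = 1 := by
    intro N
    rw [← pow_mul, mul_comm, pow_mul, hζF, one_pow]
  have hPinj : Function.Injective P := by
    have hpow_inj : ∀ (j j' : Fin (q + 1)),
        ((ζ : F)) ^ (j : ℕ) = ((ζ : F)) ^ (j' : ℕ) → j = j' := by
      intro j j' h
      have h2 : ζ ^ (j : ℕ) = ζ ^ (j' : ℕ) := Units.ext
        (by rw [Units.val_pow_eq_pow_val, Units.val_pow_eq_pow_val]; exact h)
      have h3 := pow_injOn_Iio_orderOf (x := ζ)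
        (Set.mem_Iio.mpr (by rw [ordζ]; exact j.isLt))
        (Set.mem_Iio.mpr (by rw [ordζ]; exact j'.isLt)) h2
      exact Fin.ext h3
    have hcross : ∀ (j j' : Fin (q + 1)),
        ((ζ : F)) ^ (j : ℕ) ≠ (η : F) * ((ζ : F)) ^ (j' : ℕ) := by
      intro j j' h
      have h1 := hval1 (j : ℕ)
      rw [h, mul_pow, hηF, hval1 (j' : ℕ), mul_one] at h1
      exact hm1 h1
    intro x y hxy
    rcases x with j | j <;> rcases y with j' | j'
    · simp only [hP, Sum.elim_inl] at hxy
      exact congrArg Sum.inl (hpow_inj _ _ hxy)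
    · simp only [hP, Sum.elim_inl, Sum.elim_inr] at hxy
      exact absurd hxy (hcross j j')
    · simp only [hP, Sum.elim_inl, Sum.elim_inr] at hxy
      exact absurd hxy.symm (hcross j' j)
    · simp only [hP, Sum.elim_inr] at hxy
      have := mul_left_cancel₀ (Units.ne_zero η) hxy
      exact congrArg Sum.inr (hpow_inj _ _ this)
  have hPne : ∀ x, P x ≠ 0 := by
    intro x
    rcases x with j | j <;> simp only [hP, Sum.elim_inl, Sum.elim_inr]
    · exact pow_ne_zero _ (Units.ne_zero ζ)
    · exact mul_ne_zero (Units.ne_zero η) (pow_ne_zero _ (Units.ne_zero ζ))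
  -- the polynomial
  set fpoly : (Fin (i + 2) → F) → Polynomial F :=
    fun A => ∑ m ∈ Finset.range (i + 2), Polynomial.C (bar A m) * Polynomial.X ^ m with hfpoly
  have hcoeff : ∀ (A : Fin (i + 2) → F) (n : ℕ), (fpoly A).coeff n = bar A n := by
    intro A n
    rw [hfpoly]
    simp only []
    rw [Polynomial.finset_sum_coeff]
    simp_rw [Polynomial.coeff_C_mul, Polynomial.coeff_X_pow, mul_ite, mul_one, mul_zero]
    rw [Finset.sum_ite_eq (Finset.range (i + 2)) n (bar A)]
    by_cases hn : n < i + 2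
    · rw [if_pos (Finset.mem_range.mpr hn)]
    · rw [if_neg (fun hmem => hn (Finset.mem_range.mp hmem))]
      rw [hbar]
      simp only []
      rw [dif_neg (show ¬ n < i + 2 by omega)]
  have heval : ∀ (A : Fin (i + 2) → F) (x : F),
      (fpoly A).eval x = ∑ m ∈ Finset.range (i + 2), bar A m * x ^ m := by
    intro A x
    rw [hfpoly]
    simp only []
    rw [Polynomial.eval_finset_sum]
    exact Finset.sum_congr rfl fun m _ => by simp
  have hfne : ∀ A : Fin (i + 2) → F, A ≠ 0 → fpoly A ≠ 0 := by
    intro A hA h0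
    apply hA
    funext m
    have h1 := hcoeff A (m : ℕ)
    rw [h0, Polynomial.coeff_zero] at h1
    have hb : bar A (m : ℕ) = A m := by
      rw [hbar]
      simp only [dif_pos m.isLt, Fin.eta]
    rw [hb] at h1
    exact h1.symm
  have hdeg : ∀ A : Fin (i + 2) → F, (fpoly A).natDegree ≤ i + 1 := by
    intro A
    rw [hfpoly]
    simp only []
    apply Polynomial.natDegree_sum_le_of_forall_le
    intro m hm
    refine le_trans (Polynomial.natDegree_C_mul_le _ _) ?_
    rw [Polynomial.natDegree_X_pow]
    exact Nat.lt_succ_iff.mp (Finset.mem_range.mp hm)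
  -- norm splitting
  have hnorm_split : ∀ (x : (Fin (q + 1) ⊕ (Fin (q + 1) ⊕ Fin i)) → F),
      hammingNorm x = hammingNorm (fun j : Fin (q + 1) => x (Sum.inl j))
        + hammingNorm (fun j : Fin (q + 1) => x (Sum.inr (Sum.inl j)))
        + hammingNorm (fun j : Fin i => x (Sum.inr (Sum.inr j))) := by
    intro x
    simp only [hammingNorm, Finset.card_filter, Fintype.sum_sum_type]
    ring
  have hcount : ∀ v : Fin (q + 1) → F,
      hammingNorm v + (Finset.univ.filter (fun j => v j = 0)).card = q + 1 := by
    intro v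
    have h := Finset.card_filter_add_card_filter_not
      (s := (Finset.univ : Finset (Fin (q + 1)))) (p := fun j => v j ≠ 0)
    simp only [not_not] at h
    simpa [hammingNorm, Finset.card_univ] using h
  have hzsplit : ∀ g : Polynomial F,
      (Finset.univ.filter (fun x : Fin (q + 1) ⊕ Fin (q + 1) => g.eval (P x) = 0)).card
      = (Finset.univ.filter (fun j : Fin (q + 1) => g.eval ((ζ : F) ^ (j : ℕ)) = 0)).card
        + (Finset.univ.filter
            (fun j : Fin (q + 1) => g.eval ((η : F) * (ζ : F) ^ (j : ℕ)) = 0)).card := by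
    intro g
    simp only [Finset.card_filter, Fintype.sum_sum_type, hP, Sum.elim_inl, Sum.elim_inr]
    convert rfl <;> split_ifs with h <;> simp [h]
  -- the main distance bound
  have hbound : ∀ A : Fin (i + 2) → F, A ≠ 0 → 2 * q + 2 - i ≤ hammingNorm (cw0 A) := by
    intro A hA
    have e1 : ∀ j : Fin (q + 1), cw0 A (Sum.inl j) = (fpoly A).eval ((ζ : F) ^ (j : ℕ)) := by
      intro j
      rw [heval]
      simp only [hcw0, Sum.elim_inl, hblockn]
      exact Finset.sum_congr rfl fun m _ => by rw [one_mul]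
    have e2 : ∀ j : Fin (q + 1),
        cw0 A (Sum.inr (Sum.inl j)) = (fpoly A).eval ((η : F) * (ζ : F) ^ (j : ℕ)) := by
      intro j
      rw [heval]
      simp only [hcw0, Sum.elim_inl, Sum.elim_inr, hblockn]
    set z1 := (Finset.univ.filter
      (fun j : Fin (q + 1) => (fpoly A).eval ((ζ : F) ^ (j : ℕ)) = 0)).card with hz1
    set z2 := (Finset.univ.filter
      (fun j : Fin (q + 1) => (fpoly A).eval ((η : F) * (ζ : F) ^ (j : ℕ)) = 0)).card with hz2
    have hroots1 : z1 + z2 ≤ i + 1 := by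
      rw [hz1, hz2, ← hzsplit]
      exact le_trans (card_roots_filter P hPinj (fpoly A) (hfne A hA)) (hdeg A)
    have hroots2 : bar A 0 = 0 → z1 + z2 ≤ i := by
      intro h0
      obtain ⟨h, hfh⟩ := Polynomial.X_dvd_iff.mpr (by rw [hcoeff]; exact h0)
      have hne : h ≠ 0 := by
        intro hh
        exact hfne A hA (by rw [hfh, hh, mul_zero])
      have hdegh : h.natDegree ≤ i := by
        have hd := hdeg A
        rw [hfh, Polynomial.natDegree_mul Polynomial.X_ne_zero hne,
          Polynomial.natDegree_X] at hd
        omega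
      have hfilter_eq :
          (Finset.univ.filter (fun x : Fin (q + 1) ⊕ Fin (q + 1) => (fpoly A).eval (P x) = 0))
          = (Finset.univ.filter (fun x => h.eval (P x) = 0)) := by
        apply Finset.filter_congr
        intro x _
        rw [hfh, Polynomial.eval_mul, Polynomial.eval_X]
        simp [hPne x]
      calc z1 + z2 = (Finset.univ.filter
          (fun x : Fin (q + 1) ⊕ Fin (q + 1) => (fpoly A).eval (P x) = 0)).card :=
            (hzsplit (fpoly A)).symm
        _ = (Finset.univ.filter (fun x => h.eval (P x) = 0)).card := by rw [hfilter_eq]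
        _ ≤ h.natDegree := card_roots_filter P hPinj h hne
        _ ≤ i := hdegh
    have hextra : bar A 0 ≠ 0 →
        1 ≤ hammingNorm (fun j : Fin i => cw0 A (Sum.inr (Sum.inr j))) := by
      intro h0
      have hmem : (⟨0, by omega⟩ : Fin i) ∈
          Finset.univ.filter (fun j : Fin i => cw0 A (Sum.inr (Sum.inr j)) ≠ 0) := by
        rw [Finset.mem_filter]
        refine ⟨Finset.mem_univ _, ?_⟩
        simp only [hcw0, Sum.elim_inr]
        exact mul_ne_zero (Units.ne_zero c) (by simpa using h0)
      exact Finset.card_pos.mpr ⟨_, hmem⟩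
    rw [hnorm_split (cw0 A)]
    simp only [e1, e2]
    have hc1 := hcount (fun j => cw0 A (Sum.inl j))
    have hc2 := hcount (fun j => cw0 A (Sum.inr (Sum.inl j)))
    simp only [e1] at hc1
    simp only [e2] at hc2
    rw [← hz1] at hc1
    rw [← hz2] at hc2
    rcases eq_or_ne (bar A 0) 0 with h0 | h0
    · have h5 := hroots2 h0
      omega
    · have h6 := hextra h0
      omega
  have hcw_app : ∀ A, cw A = cw0 A := fun _ => rfl
  have hinj : Function.Injective cw := by
    intro A B hAB
    by_contra hne
    have hABne : A - B ≠ 0 := sub_ne_zero.mpr hne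
    have hb := hbound (A - B) hABne
    have h0 : cw (A - B) = 0 := by rw [map_sub, hAB, sub_self]
    rw [hcw_app] at h0
    rw [h0, hammingNorm_zero] at hb
    omega
  -- nonzero witness
  have hA1ne : (fun _ : Fin (i + 2) => (1 : F)) ≠ 0 := by
    intro h
    exact one_ne_zero (congrFun h 0)
  -- the weight 2q witness
  set A2 : Fin (i + 2) → F :=
    fun m => if (m : ℕ) = 1 then -1 else if (m : ℕ) = 3 then 1 else 0 with hA2def
  have hbarA2 : ∀ n : ℕ, bar A2 n = if n = 1 then -1 else if n = 3 then 1 else 0 := by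
    intro n
    rw [hbar]
    by_cases h : n < i + 2
    · simp only [dif_pos h, hA2def]
    · simp only [dif_neg h]
      rw [if_neg (by omega), if_neg (by omega)]
  have hA2ne : A2 ≠ 0 := by
    intro h
    have h1 := congrFun h ⟨1, by omega⟩
    simp only [hA2def, Pi.zero_apply] at h1
    norm_num at h1
  have hblockA2 : ∀ (u : F) (j : ℕ),
      blockn u A2 j = (u * (ζ : F) ^ j) ^ 3 - (u * (ζ : F) ^ j) := by
    intro u j
    rw [hblockn]
    simp only []
    have hterm : ∀ m ∈ Finset.range (i + 2), bar A2 m * (u * (ζ : F) ^ j) ^ m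
        = (if m = 1 then -(u * (ζ : F) ^ j) else 0)
          + (if m = 3 then (u * (ζ : F) ^ j) ^ 3 else 0) := by
      intro m _
      rw [hbarA2]
      by_cases h1 : m = 1
      · subst h1; norm_num
      · by_cases h3 : m = 3
        · subst h3; norm_num
        · simp [h1, h3]
    rw [Finset.sum_congr rfl hterm, Finset.sum_add_distrib,
      Finset.sum_ite_eq' (Finset.range (i + 2)) 1 (fun _ => -(u * (ζ : F) ^ j)),
      Finset.sum_ite_eq' (Finset.range (i + 2)) 3 (fun _ => (u * (ζ : F) ^ j) ^ 3),
      if_pos (Finset.mem_range.mpr (by omega : 1 < i + 2)),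
      if_pos (Finset.mem_range.mpr (by omega : 3 < i + 2))]
    ring
  have hw2 : hammingNorm (cw0 A2) = 2 * q := by
    rw [hnorm_split]
    have h3 : (fun j : Fin i => cw0 A2 (Sum.inr (Sum.inr j))) = fun _ => (0 : F) := by
      funext j
      simp only [hcw0, Sum.elim_inr]
      rw [hbarA2, if_neg (by omega), if_neg (by omega)]
      ring
    have hz3 : hammingNorm (fun j : Fin i => cw0 A2 (Sum.inr (Sum.inr j))) = 0 := by
      rw [h3]
      simp [hammingNorm]
    have hb1 : ∀ j : Fin (q + 1),
        cw0 A2 (Sum.inl j) = ((ζ : F) ^ (j : ℕ)) ^ 3 - (ζ : F) ^ (j : ℕ) := by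
      intro j
      simp only [hcw0, Sum.elim_inl]
      rw [hblockA2 1, one_mul]
    have hb2 : ∀ j : Fin (q + 1), cw0 A2 (Sum.inr (Sum.inl j))
        = ((η : F) * (ζ : F) ^ (j : ℕ)) ^ 3 - ((η : F) * (ζ : F) ^ (j : ℕ)) := by
      intro j
      simp only [hcw0, Sum.elim_inl, Sum.elim_inr]
      rw [hblockA2]
    have cube_factor : ∀ y : F, y ≠ 0 → y ^ 3 - y = 0 → y ^ 2 = 1 := by
      intro y hy h
      have h' : y * (y ^ 2 - 1) = 0 := by rw [← h]; ring
      rcases mul_eq_zero.mp h' with h'' | h''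
      · exact absurd h'' hy
      · exact sub_eq_zero.mp h''
    have hn2 : hammingNorm (fun j : Fin (q + 1) => cw0 A2 (Sum.inr (Sum.inl j))) = q + 1 := by
      have hnz : ∀ j : Fin (q + 1), cw0 A2 (Sum.inr (Sum.inl j)) ≠ 0 := by
        intro j h
        rw [hb2 j] at h
        have hyne : (η : F) * (ζ : F) ^ (j : ℕ) ≠ 0 :=
          mul_ne_zero (Units.ne_zero η) (pow_ne_zero _ (Units.ne_zero ζ))
        have hy2 := cube_factor _ hyne h
        have hyq : ((η : F) * (ζ : F) ^ (j : ℕ)) ^ (q + 1) = -1 := by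
          rw [mul_pow, hηF, hval1, mul_one]
        obtain ⟨m1, hm1'⟩ : ∃ m1, q + 1 = 2 * m1 := ⟨(q + 1) / 2, by omega⟩
        have hyq1 : ((η : F) * (ζ : F) ^ (j : ℕ)) ^ (q + 1) = 1 := by
          have e : ((η : F) * (ζ : F) ^ (j : ℕ)) ^ (q + 1)
              = (((η : F) * (ζ : F) ^ (j : ℕ)) ^ 2) ^ m1 := by
            rw [← pow_mul]
            exact congrArg (fun N => ((η : F) * (ζ : F) ^ (j : ℕ)) ^ N) hm1'
          rw [e, hy2, one_pow]
        rw [hyq] at hyq1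
        exact hm1 hyq1
      have hcnt := hcount (fun j => cw0 A2 (Sum.inr (Sum.inl j)))
      have hzero : (Finset.univ.filter
          (fun j : Fin (q + 1) => cw0 A2 (Sum.inr (Sum.inl j)) = 0)).card = 0 := by
        rw [Finset.card_eq_zero, Finset.filter_eq_empty_iff]
        intro j _
        exact hnz j
      omega
    have hn1 : hammingNorm (fun j : Fin (q + 1) => cw0 A2 (Sum.inl j)) = q - 1 := by
      have hcnt := hcount (fun j => cw0 A2 (Sum.inl j))
      have hmid : (q + 1) / 2 < q + 1 := by omega
      have hzset : (Finset.univ.filter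
          (fun j : Fin (q + 1) => cw0 A2 (Sum.inl j) = 0))
          = {(0 : Fin (q + 1)), ⟨(q + 1) / 2, hmid⟩} := by
        ext j
        simp only [Finset.mem_filter, Finset.mem_univ, true_and, Finset.mem_insert,
          Finset.mem_singleton]
        rw [hb1 j]
        constructor
        · intro h
          have hxne : (ζ : F) ^ (j : ℕ) ≠ 0 := pow_ne_zero _ (Units.ne_zero ζ)
          have hx2 := cube_factor _ hxne h
          have hu : ζ ^ (2 * (j : ℕ)) = 1 := by
            apply Units.ext
            rw [Units.val_pow_eq_pow_val, Units.val_one,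
              show 2 * (j : ℕ) = (j : ℕ) * 2 from by ring, pow_mul]
            exact hx2
          obtain ⟨t, ht⟩ := (hζpow _).mp hu
          have hjlt : (j : ℕ) < q + 1 := j.isLt
          have ht2 : t ≤ 1 := by
            by_contra hgt
            push_neg at hgt
            have := Nat.mul_le_mul_left (q + 1) hgt
            omega
          have ht01 : t = 0 ∨ t = 1 := by omega
          rcases ht01 with rfl | rfl
          · left
            rw [mul_zero] at ht
            exact Fin.ext (by simp only [Fin.val_zero]; omega)
          · right
            rw [mul_one] at ht
            exact Fin.ext (by show (j : ℕ) = (q + 1) / 2; omega)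
        · intro h
          rcases h with rfl | rfl
          · norm_num
          · have hx2 : ((ζ : F) ^ (((⟨(q + 1) / 2, hmid⟩ : Fin (q + 1)) : ℕ))) ^ 2 = 1 := by
              rw [← pow_mul]
              have heq : ((⟨(q + 1) / 2, hmid⟩ : Fin (q + 1)) : ℕ) * 2 = q + 1 := by
                show (q + 1) / 2 * 2 = q + 1
                omega
              rw [heq, hζF]
            set x := (ζ : F) ^ (((⟨(q + 1) / 2, hmid⟩ : Fin (q + 1)) : ℕ)) with hx
            calc x ^ 3 - x = x * x ^ 2 - x := by ring
              _ = 0 := by rw [hx2]; ring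
      rw [hzset] at hcnt
      have hcard2 : ({(0 : Fin (q + 1)), ⟨(q + 1) / 2, hmid⟩} : Finset (Fin (q + 1))).card = 2 := by
        rw [Finset.card_insert_of_notMem, Finset.card_singleton]
        simp only [Finset.mem_singleton]
        intro h
        have := congrArg Fin.val h
        simp only [Fin.val_zero] at this
        omega
      rw [hcard2] at hcnt
      omega
    rw [hz3, hn1, hn2]
    omega
  -- transport to Fin (2*(q+1)+i)
  set C₀ : Submodule F ((Fin (q + 1) ⊕ (Fin (q + 1) ⊕ Fin i)) → F) := LinearMap.range cw
    with hC₀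
  have he : (q + 1) + ((q + 1) + i) = 2 * (q + 1) + i := by ring
  set e : (Fin (q + 1) ⊕ (Fin (q + 1) ⊕ Fin i)) ≃ Fin (2 * (q + 1) + i) :=
    ((Equiv.sumCongr (Equiv.refl (Fin (q + 1))) finSumFinEquiv).trans finSumFinEquiv).trans
      (finCongr he) with hedef
  set T : ((Fin (q + 1) ⊕ (Fin (q + 1) ⊕ Fin i)) → F) ≃ₗ[F] (Fin (2 * (q + 1) + i) → F) :=
    LinearEquiv.funCongrLeft F F e.symm with hTdef
  have hTapp : ∀ x : (Fin (q + 1) ⊕ (Fin (q + 1) ⊕ Fin i)) → F, T x = x ∘ e.symm :=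
    fun x => rfl
  refine ⟨Submodule.map T.toLinearMap C₀, ?_, ?_, ?_, ?_, ?_⟩
  · -- self-orthogonality
    intro x hx y hy
    rw [Submodule.mem_map] at hx hy
    obtain ⟨x', hx', rfl⟩ := hx
    obtain ⟨y', hy', rfl⟩ := hy
    rw [hC₀, LinearMap.mem_range] at hx' hy'
    obtain ⟨A, rfl⟩ := hx'
    obtain ⟨B, rfl⟩ := hy'
    show hermInner q (T.toLinearMap (cw A)) (T.toLinearMap (cw B)) = 0
    have hT2 : ∀ z : (Fin (q + 1) ⊕ (Fin (q + 1) ⊕ Fin i)) → F,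
        T.toLinearMap z = z ∘ e.symm := fun z => rfl
    simp only [hermInner]
    rw [hT2, hT2, hcw_app, hcw_app]
    simp only [Function.comp_apply]
    exact Eq.trans (Equiv.sum_comp e.symm fun t => cw0 A t * (cw0 B t) ^ q) (hso A B)
  · -- finrank
    rw [LinearEquiv.finrank_map_eq T C₀, hC₀, LinearMap.finrank_range_of_inj hinj,
      Module.finrank_fin_fun]
    omega
  · -- distance bound
    intro x hx hxne
    rw [Submodule.mem_map] at hx
    obtain ⟨x', hx', rfl⟩ := hx
    rw [hC₀, LinearMap.mem_range] at hx'
    obtain ⟨A, rfl⟩ := hx'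
    have hAne : A ≠ 0 := by
      rintro rfl
      apply hxne
      rw [map_zero, map_zero]
    have hnormeq : hammingNorm (T.toLinearMap (cw A)) = hammingNorm (cw0 A) := by
      have hT2 : T.toLinearMap (cw A) = (cw0 A) ∘ e.symm := by rw [hcw_app]; rfl
      rw [hT2]
      exact hammingNorm_comp_equiv e.symm (cw0 A)
    rw [hnormeq]
    exact hbound A hAne
  · -- nonzero element
    refine ⟨T.toLinearMap (cw (fun _ => 1)), Submodule.mem_map_of_mem (LinearMap.mem_range_self _ _), ?_⟩
    intro h0
    have h1 : T (cw (fun _ => (1 : F))) = 0 := h0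
    rw [LinearEquiv.map_eq_zero_iff] at h1
    have h2 : cw (fun _ => (1 : F)) = cw 0 := by rw [h1, map_zero]
    exact hA1ne (hinj h2)
  · -- weight 2q element
    refine ⟨T.toLinearMap (cw A2), Submodule.mem_map_of_mem (LinearMap.mem_range_self _ _), ?_, ?_⟩
    · intro h0
      have h1 : T (cw A2) = 0 := h0
      rw [LinearEquiv.map_eq_zero_iff] at h1
      have h2 : cw A2 = cw 0 := by rw [h1, map_zero]
      exact hA2ne (hinj h2)
    · have hT2 : T.toLinearMap (cw A2) = (cw0 A2) ∘ e.symm := by rw [hcw_app]; rfl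
      rw [hT2, hammingNorm_comp_equiv e.symm (cw0 A2)]
      exact hw2

/-- for `q` an odd prime power, (i) there is an AMDS Hermitian
self-orthogonal `[2(q+1)+2, 4, 2q]` code over `F_{q²}`, and (ii) for `2 ≤ i ≤ q`
there is a Hermitian self-orthogonal `[2(q+1)+i, 2+i, d]` code with `d ≥ 2q+2-i`. -/
theorem herm_self_orth_two_q_plus_one_family
    (q : ℕ) (hq : IsPrimePow q) (hodd : Odd q)
    (F : Type) [Field F] [Fintype F] [DecidableEq F]
    (hF : Fintype.card F = q ^ 2) :
    (∃ C : Submodule F (Fin (2 * (q + 1) + 2) → F),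
      IsHermSelfOrth q C ∧ Module.finrank F C = 4 ∧
        HasMinDist (C : Set (Fin (2 * (q + 1) + 2) → F)) (2 * q)) ∧
    (∀ i : ℕ, 2 ≤ i → i ≤ q →
      ∃ C : Submodule F (Fin (2 * (q + 1) + i) → F),
        IsHermSelfOrth q C ∧ Module.finrank F C = 2 + i ∧
          ∃ d : ℕ, 2 * q + 2 - i ≤ d ∧
            HasMinDist (C : Set (Fin (2 * (q + 1) + i) → F)) d) := by
  constructor
  · -- part (i): i = 2
    obtain ⟨C, hso, hrank, hbound, -, ⟨x2, hx2C, hx2ne, hx2w⟩⟩ :=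
      herm_key q hq hodd F hF 2 le_rfl (by
        obtain ⟨p, k, hp, hk, hpk⟩ := hq
        have hp2 : 2 ≤ p := (Nat.prime_iff.mpr hp).two_le
        calc 2 ≤ p := hp2
        _ ≤ p ^ k := Nat.le_self_pow hk.ne' p
        _ = q := hpk)
    refine ⟨C, ?_, by rw [hrank], ?_, ?_⟩
    · intro y hy x hx
      exact hso x hx y hy
    · exact ⟨x2, hx2C, hx2ne, hx2w⟩
    · rintro w ⟨x, hxC, hxne, rfl⟩
      have := hbound x hxC hxne
      omega
  · -- part (ii)
    intro i h2i hiq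
    obtain ⟨C, hso, hrank, hbound, ⟨x1, hx1C, hx1ne⟩, -⟩ :=
      herm_key q hq hodd F hF i h2i hiq
    refine ⟨C, ?_, hrank, ?_⟩
    · intro y hy x hx
      exact hso x hx y hy
    · have hSne : {w | ∃ x ∈ (C : Set (Fin (2 * (q + 1) + i) → F)), x ≠ 0 ∧
          hammingNorm x = w}.Nonempty := ⟨hammingNorm x1, x1, hx1C, hx1ne, rfl⟩
      refine ⟨sInf {w | ∃ x ∈ (C : Set (Fin (2 * (q + 1) + i) → F)), x ≠ 0 ∧
        hammingNorm x = w}, ?_, Nat.sInf_mem hSne, fun w hw => Nat.sInf_le hw⟩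
      obtain ⟨x, hxC, hxne, hxw⟩ := Nat.sInf_mem hSne
      rw [← hxw]
      exact hbound x hxC hxne
end

section
/- Let q be a prime power such that 3 divides q−1 or 4 divides q−1, and set n = 3(q+1)+1. Then for every integer i with 1 ≤ i ≤ q there exists a Hermitian self-orthogonal linear code over F_{q^2} with parameters [n+i, 3+i, d] for some d ≥ n−2−i. -/
open Finset Polynomial


open Finset Polynomial

private lemma natCasesHSO (q a b : ℕ) (hq : 4 ≤ q) (ha : a ≤ q + 2) (hb : b ≤ q + 2)
    (h : (q + 1) ∣ (a + b * q)) :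
    a = b ∨ (a = q + 1 ∧ b = 0) ∨ (a = 0 ∧ b = q + 1) ∨
      (a = q + 2 ∧ b = 1) ∨ (a = 1 ∧ b = q + 2) := by
  have hz : ((q : ℤ) + 1) ∣ ((a : ℤ) + b * q) := by exact_mod_cast h
  have h2 : ((q : ℤ) + 1) ∣ ((a : ℤ) - b) := by
    have he : ((a : ℤ) - b) = ((a : ℤ) + b * q) - (q + 1) * b := by ring
    rw [he]
    exact dvd_sub hz ⟨b, rfl⟩
  obtain ⟨d, hd⟩ := h2
  have haz : (a : ℤ) ≤ (q : ℤ) + 2 := by exact_mod_cast ha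
  have hbz : (b : ℤ) ≤ (q : ℤ) + 2 := by exact_mod_cast hb
  have hqz : (4 : ℤ) ≤ (q : ℤ) := by exact_mod_cast hq
  have hd1 : d ≤ 1 := by
    by_contra hc
    push_neg at hc
    have h2d : ((q : ℤ) + 1) * 2 ≤ ((q : ℤ) + 1) * d :=
      mul_le_mul_of_nonneg_left (by omega) (by linarith)
    have hb0 : (0 : ℤ) ≤ (b : ℤ) := by positivity
    linarith
  have hd2 : -1 ≤ d := by
    by_contra hc
    push_neg at hc
    have h2d : ((q : ℤ) + 1) * d ≤ ((q : ℤ) + 1) * (-2) :=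
      mul_le_mul_of_nonneg_left (by omega) (by linarith)
    have ha0 : (0 : ℤ) ≤ (a : ℤ) := by positivity
    linarith
  interval_cases d <;> omega

private lemma geomZeroHSO {F : Type} [Field F] {x : F} (hx : x ≠ 1) {N : ℕ} (hN : x ^ N = 1) :
    ∑ j ∈ Finset.range N, x ^ j = 0 := by
  have h := geom_sum_mul x N
  rw [hN, sub_self] at h
  rcases mul_eq_zero.mp h with h1 | h2
  · exact h1
  · exact absurd (sub_eq_zero.mp h2) hx


def monomialCodeHSO {F : Type} [Field F] {k N : ℕ} (W : Fin k → Fin N → F) :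
    (Fin k → F) →ₗ[F] (Fin N → F) where
  toFun c := fun idx => ∑ a, c a * W a idx
  map_add' c c' := by
    funext idx
    simp [add_mul, Finset.sum_add_distrib]
  map_smul' r c := by
    funext idx
    simp [Finset.mul_sum, mul_assoc]

private lemma monomialCodeHSO_inner {q : ℕ} {F : Type} [Field F] {k N : ℕ}
    (W : Fin k → Fin N → F)
    (hfrob : ∀ g : Fin k → F, (∑ b, g b) ^ q = ∑ b, g b ^ q)
    (hGram : ∀ a b : Fin k, ∑ idx, W a idx * W b idx ^ q = 0)
    (c c' : Fin k → F) :
    hermInner q (monomialCodeHSO W c) (monomialCodeHSO W c') = 0 := by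
  unfold hermInner monomialCodeHSO
  simp only [LinearMap.coe_mk, AddHom.coe_mk]
  have step : ∀ idx : Fin N,
      (∑ a, c a * W a idx) * (∑ b, c' b * W b idx) ^ q
        = ∑ a, ∑ b, c a * c' b ^ q * (W a idx * W b idx ^ q) := by
    intro idx
    rw [hfrob, Finset.sum_mul_sum]
    refine Finset.sum_congr rfl fun a _ => Finset.sum_congr rfl fun b _ => ?_
    rw [mul_pow]; ring
  simp only [step]
  rw [Finset.sum_comm]
  refine Finset.sum_eq_zero fun a _ => ?_
  rw [Finset.sum_comm]
  refine Finset.sum_eq_zero fun b _ => ?_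
  rw [← Finset.mul_sum, hGram, mul_zero]

/-- if `3 ∣ q-1` or `4 ∣ q-1` and `n = 3(q+1)+1`, then for every
`1 ≤ i ≤ q` there is a Hermitian self-orthogonal `[n+i, 3+i, d]` code over `F_{q²}`
with `d ≥ n-2-i`. -/
theorem herm_self_orth_three_cosets_family
    (q : ℕ) (hq : IsPrimePow q) (hdvd : 3 ∣ q - 1 ∨ 4 ∣ q - 1)
    (n : ℕ) (hn : n = 3 * (q + 1) + 1)
    (F : Type) [Field F] [Fintype F] [DecidableEq F]
    (hF : Fintype.card F = q ^ 2) :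
    ∀ i : ℕ, 1 ≤ i → i ≤ q →
      ∃ C : Submodule F (Fin (n + i) → F),
        IsHermSelfOrth q C ∧ Module.finrank F C = 3 + i ∧
          ∃ d : ℕ, n - 2 - i ≤ d ∧
            HasMinDist (C : Set (Fin (n + i) → F)) d := by
  intro i hi1 hiq
  obtain ⟨r, m, hrp', hm, hrm⟩ := hq
  have hrp : r.Prime := hrp'.nat_prime
  have hr2 : 2 ≤ r := hrp.two_le
  have hq2 : 2 ≤ q := by
    have : 1 < r ^ m := Nat.one_lt_pow (by omega) (by omega)
    omega
  have hq4 : 4 ≤ q := by rcases hdvd with ⟨c, hc⟩ | ⟨c, hc⟩ <;> omega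
  -- characteristic
  haveI : CharP F (ringChar F) := ringChar.charP F
  obtain ⟨nn, hnnp, hnncard⟩ := FiniteField.card F (ringChar F)
  have hrchar : ringChar F = r := by
    have h1 : r ^ (2 * m) = ringChar F ^ (nn : ℕ) := by
      rw [← hnncard, hF, ← hrm]; ring
    have hrdvd : r ∣ ringChar F ^ (nn : ℕ) := h1 ▸ dvd_pow_self r (by omega)
    have h2 := hrp.dvd_of_dvd_pow hrdvd
    exact ((Nat.prime_dvd_prime_iff_eq hrp hnnp).mp h2).symm
  haveI : CharP F r := hrchar ▸ ringChar.charP F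
  haveI : Fact r.Prime := ⟨hrp⟩
  have hq0 : q ≠ 0 := by omega
  have hcast_q : (q : F) = 0 := by
    rw [← hrm]; push_cast
    rw [CharP.cast_eq_zero F r]
    exact zero_pow (by omega)
  have hfrob : ∀ {ι : Type} (s : Finset ι) (g : ι → F),
      (∑ b ∈ s, g b) ^ q = ∑ b ∈ s, g b ^ q := by
    intro ι s g; rw [← hrm]; exact sum_pow_char_pow (p := r) (n := m) s g
  have hsubq : ∀ x y : F, (x - y) ^ q = x ^ q - y ^ q := by
    intro x y; rw [← hrm]; exact sub_pow_char_pow (p := r) x y m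
  have hnegq : ∀ x : F, (-x) ^ q = -(x ^ q) := by
    intro x
    have h := hsubq 0 x
    simpa [zero_pow hq0] using h
  have haddq : ∀ x y : F, (x + y) ^ q = x ^ q + y ^ q := by
    intro x y
    have h := hsubq x (-y)
    simpa [hnegq] using h
  -- generator
  obtain ⟨g, hg⟩ := IsCyclic.exists_generator (α := Fˣ)
  set M := q ^ 2 - 1 with hMdef
  have hcardU : Fintype.card Fˣ = M := by rw [Fintype.card_units, hF]
  have horder : orderOf g = M := by
    rw [orderOf_eq_card_of_forall_mem_zpowers hg, Nat.card_eq_fintype_card, hcardU]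
  have hM : (q + 1) * (q - 1) = M := by
    obtain ⟨s, rfl⟩ : ∃ s, q = s + 4 := ⟨q - 4, by omega⟩
    have h1 : (s + 4 + 1) * (s + 4 - 1) + 1 = (s + 4) ^ 2 := by
      have : s + 4 - 1 = s + 3 := rfl
      rw [this]; ring
    exact Nat.eq_sub_of_add_eq h1
  have hM3 : 3 * q + 3 ≤ M := by
    have h1 : (q + 1) * 3 ≤ (q + 1) * (q - 1) := Nat.mul_le_mul_left _ (by omega)
    omega
  set gg : F := ((g : Fˣ) : F) with hgg
  have hggu : ∀ e : ℕ, gg ^ e = ((g ^ e : Fˣ) : F) := by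
    intro e; rw [hgg]; exact (Units.val_pow_eq_pow_val g e).symm
  have hgpow1 : g ^ M = 1 := by rw [← horder]; exact pow_orderOf_eq_one g
  have hggM : gg ^ M = 1 := by rw [hggu, hgpow1, Units.val_one]
  have key2 : ∀ a D : ℕ, 0 < D → D < M → g ^ a ≠ g ^ (a + D) := by
    intro a D hD hDM heq
    have h1 : g ^ a * g ^ D = g ^ a * 1 := by rw [← pow_add, mul_one]; exact heq.symm
    have h2 : g ^ D = 1 := mul_left_cancel h1
    have hdvd2 := orderOf_dvd_of_pow_eq_one h2
    rw [horder] at hdvd2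
    exact absurd (Nat.le_of_dvd hD hdvd2) (by omega)
  have keyF : ∀ a D : ℕ, 0 < D → D < M → gg ^ a ≠ gg ^ (a + D) := by
    intro a D hD hDM heq
    rw [hggu, hggu] at heq
    exact key2 a D hD hDM (Units.ext heq)
  -- norm surjectivity
  have hnorm : ∀ x : F, x ^ q = x → ∃ w : F, w ^ (q + 1) = x := by
    intro x hx
    rcases eq_or_ne x 0 with rfl | hx0
    · exact ⟨0, by rw [zero_pow (by omega)]⟩
    · set xu := Units.mk0 x hx0 with hxu
      obtain ⟨s, hs0⟩ := (isOfFinOrder_of_finite g).mem_powers_iff_mem_zpowers.mpr (hg xu)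
      have hs : g ^ s = xu := hs0
      have hxq1 : x ^ (q - 1) = 1 := by
        have h1 : x ^ (q - 1) * x = 1 * x := by
          rw [one_mul, ← pow_succ]
          rw [show q - 1 + 1 = q by omega]
          exact hx
        exact mul_right_cancel₀ hx0 h1
      have hxuq : xu ^ (q - 1) = 1 := by
        ext
        rw [Units.val_pow_eq_pow_val, Units.val_one, hxu, Units.val_mk0]
        exact hxq1
      have h1 : g ^ (s * (q - 1)) = 1 := by rw [pow_mul, hs, hxuq]
      have hdvd2 := orderOf_dvd_of_pow_eq_one h1
      rw [horder, ← hM] at hdvd2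
      have hq1dvd : (q + 1) ∣ s := by
        have := (Nat.mul_dvd_mul_iff_right (show 0 < q - 1 by omega)).mp hdvd2
        exact this
      obtain ⟨s', hs'⟩ := hq1dvd
      refine ⟨gg ^ s', ?_⟩
      rw [← pow_mul, hggu]
      have h3 : g ^ (s' * (q + 1)) = xu := by rw [← hs, hs']; congr 1; ring
      rw [h3, hxu, Units.val_mk0]
  -- zeta / geometric sums
  have hζ1 : (gg ^ (q - 1)) ^ (q + 1) = 1 := by
    rw [← pow_mul, mul_comm (q-1) (q+1), hM, hggM]
  have hζf1 : ∀ mm : ℕ, (q + 1) ∣ mm → (gg ^ (q - 1)) ^ mm = 1 := by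
    intro mm ⟨c, hc⟩
    rw [hc, pow_mul, hζ1, one_pow]
  have hζord : orderOf (g ^ (q - 1)) = q + 1 := by
    rw [orderOf_pow, horder]
    have hgcd : Nat.gcd M (q - 1) = q - 1 := Nat.gcd_eq_right ⟨q + 1, by rw [← hM]; ring⟩
    rw [hgcd, ← hM, Nat.mul_div_cancel _ (by omega)]
  have hζfne : ∀ mm : ℕ, ¬(q + 1) ∣ mm → (gg ^ (q - 1)) ^ mm ≠ 1 := by
    intro mm hmm h1
    apply hmm
    rw [← hζord]
    apply orderOf_dvd_of_pow_eq_one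
    apply Units.ext
    rw [Units.val_pow_eq_pow_val, Units.val_pow_eq_pow_val, Units.val_one]
    exact h1
  have hgeom : ∀ mm : ℕ, ∑ j ∈ Finset.range (q + 1), ((gg ^ (q - 1)) ^ mm) ^ j
      = if (q + 1) ∣ mm then 1 else 0 := by
    intro mm
    split_ifs with h
    · rw [hζf1 mm h]
      simp only [one_pow, Finset.sum_const, Finset.card_range, nsmul_eq_mul, mul_one]
      push_cast
      rw [hcast_q]; ring
    · refine geomZeroHSO (hζfne mm h) ?_
      rw [← pow_mul, mul_comm, pow_mul, hζf1 (q + 1) dvd_rfl, one_pow]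
  -- gamma
  set γf : Fin 3 → F := fun t => gg ^ (((t : ℕ) + 1) * (q + 1)) with hγf
  have hγfu : ∀ t : Fin 3, γf t = ((g ^ (((t : ℕ) + 1) * (q + 1)) : Fˣ) : F) := fun t => hggu _
  have hγne0 : ∀ t, γf t ≠ 0 := fun t => by rw [hγfu]; exact Units.ne_zero _
  have keyγ : ∀ t1 t2 : Fin 3, (t1 : ℕ) < (t2 : ℕ) → γf t1 ≠ γf t2 := by
    intro t1 t2 hlt heq
    have hd : ((t2 : ℕ) + 1) * (q + 1)
        = ((t1 : ℕ) + 1) * (q + 1) + ((t2 : ℕ) - (t1 : ℕ)) * (q + 1) := by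
      rw [← Nat.add_mul]; congr 1; omega
    rw [hγf] at heq
    simp only at heq
    rw [hd] at heq
    refine keyF _ _ ?_ ?_ heq
    · exact Nat.mul_pos (by omega) (by omega)
    · have h2 : ((t2 : ℕ) - (t1 : ℕ)) * (q + 1) ≤ 2 * (q + 1) :=
        Nat.mul_le_mul_right _ (by omega)
      omega
  have hγdist : ∀ t1 t2 : Fin 3, t1 ≠ t2 → γf t1 ≠ γf t2 := by
    intro t1 t2 hne
    rcases Nat.lt_or_ge (t1 : ℕ) (t2 : ℕ) with h | h
    · exact keyγ t1 t2 h
    · have h2 : (t2 : ℕ) < (t1 : ℕ) := by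
        rcases Nat.lt_or_ge (t2 : ℕ) (t1 : ℕ) with h3 | h3
        · exact h3
        · exact absurd (Fin.ext (by omega)) hne
      exact (keyγ t2 t1 h2).symm
  have hγq : ∀ t, γf t ^ q = γf t := by
    intro t
    have h1 : γf t ^ (q - 1) = 1 := by
      rw [hγf]
      simp only
      rw [← pow_mul, mul_assoc, hM, mul_comm, pow_mul, hggM, one_pow]
    calc γf t ^ q = γf t ^ (q - 1) * γf t := by
          rw [← pow_succ]; congr 1; omega
      _ = γf t := by rw [h1, one_mul]
  -- kernel vector u
  set u : Fin 3 → F := ![γf 1 * γf 2 * (γf 2 - γf 1), γf 2 * γf 0 * (γf 0 - γf 2),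
    γf 0 * γf 1 * (γf 1 - γf 0)] with hu
  have hu_ne : ∀ t, u t ≠ 0 := by
    intro t
    fin_cases t <;> simp only [hu, Matrix.cons_val_zero, Matrix.cons_val_one, Matrix.head_cons,
      Matrix.cons_val_two, Matrix.tail_cons]
    · exact mul_ne_zero (mul_ne_zero (hγne0 1) (hγne0 2))
        (sub_ne_zero.mpr (hγdist 2 1 (by decide)))
    · exact mul_ne_zero (mul_ne_zero (hγne0 2) (hγne0 0))
        (sub_ne_zero.mpr (hγdist 0 2 (by decide)))
    · exact mul_ne_zero (mul_ne_zero (hγne0 0) (hγne0 1))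
        (sub_ne_zero.mpr (hγdist 1 0 (by decide)))
  have husum : u 0 + u 1 + u 2 = (γf 0 - γf 1) * (γf 1 - γf 2) * (γf 2 - γf 0) := by
    simp only [hu, Matrix.cons_val_zero, Matrix.cons_val_one, Matrix.head_cons,
      Matrix.cons_val_two, Matrix.tail_cons]
    ring
  have husum_ne : u 0 + u 1 + u 2 ≠ 0 := by
    rw [husum]
    exact mul_ne_zero (mul_ne_zero (sub_ne_zero.mpr (hγdist 0 1 (by decide)))
      (sub_ne_zero.mpr (hγdist 1 2 (by decide)))) (sub_ne_zero.mpr (hγdist 2 0 (by decide)))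
  have hs1 : ∑ t : Fin 3, u t * γf t = 0 := by
    rw [Fin.sum_univ_three]
    simp only [hu, Matrix.cons_val_zero, Matrix.cons_val_one, Matrix.head_cons,
      Matrix.cons_val_two, Matrix.tail_cons]
    ring
  have hs2 : ∑ t : Fin 3, u t * γf t ^ 2 = 0 := by
    rw [Fin.sum_univ_three]
    simp only [hu, Matrix.cons_val_zero, Matrix.cons_val_one, Matrix.head_cons,
      Matrix.cons_val_two, Matrix.tail_cons]
    ring
  have hmulq : ∀ x y : F, (x * y) ^ q = x ^ q * y ^ q := fun x y => mul_pow x y q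
  have huq1 : ∀ t1 t2 : Fin 3, (γf t1 * γf t2 * (γf t2 - γf t1)) ^ q
      = γf t1 * γf t2 * (γf t2 - γf t1) := by
    intro t1 t2
    rw [hmulq, hmulq, hsubq, hγq, hγq]
  have hu_q : ∀ t, u t ^ q = u t := by
    intro t
    fin_cases t
    · exact huq1 1 2
    · exact huq1 2 0
    · exact huq1 0 1
  -- weights
  choose wv hwv using fun t => hnorm (u t) (hu_q t)
  have hwv_ne : ∀ t, wv t ≠ 0 := by
    intro t h
    apply hu_ne t
    rw [← hwv t, h, zero_pow (by omega : q + 1 ≠ 0)]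
  have hw0ex : (-(u 0 + u 1 + u 2)) ^ q = -(u 0 + u 1 + u 2) := by
    rw [hnegq, haddq, haddq, hu_q, hu_q, hu_q]
  obtain ⟨w0, hw0⟩ := hnorm _ hw0ex
  have hw0_ne : w0 ≠ 0 := by
    intro h
    apply husum_ne
    have := hw0
    rw [h, zero_pow (by omega : q + 1 ≠ 0)] at this
    exact (neg_eq_zero.mp this.symm)
  have hlamex : ∀ rr : Fin i, (-(∑ t : Fin 3, u t * γf t ^ ((rr : ℕ) + 3))) ^ q
      = -(∑ t : Fin 3, u t * γf t ^ ((rr : ℕ) + 3)) := by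
    intro rr
    rw [hnegq, hfrob]
    congr 1
    refine Finset.sum_congr rfl fun t _ => ?_
    rw [hmulq, hu_q, ← pow_mul, mul_comm ((rr : ℕ) + 3) q, pow_mul, hγq]
  choose lam hlam using fun rr => hnorm _ (hlamex rr)
  -- points
  set Q : (Fin 3 × Fin (q + 1)) ⊕ Fin 1 → F :=
    Sum.elim (fun tj => gg ^ ((tj.1 : ℕ) + 1 + (q - 1) * (tj.2 : ℕ))) (fun _ => 0) with hQ
  set wgt : (Fin 3 × Fin (q + 1)) ⊕ Fin 1 → F :=
    Sum.elim (fun tj => wv tj.1) (fun _ => w0) with hwgt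
  have hwgt_ne : ∀ s, wgt s ≠ 0 := by
    rintro (⟨t, j⟩ | z) <;> simp only [hwgt, Sum.elim_inl, Sum.elim_inr]
    · exact hwv_ne t
    · exact hw0_ne
  have hP : ∀ (t : Fin 3) (j : Fin (q + 1)) (mm : ℕ),
      (gg ^ ((t : ℕ) + 1 + (q - 1) * (j : ℕ))) ^ mm
        = (gg ^ ((t : ℕ) + 1)) ^ mm * ((gg ^ (q - 1)) ^ mm) ^ (j : ℕ) := by
    intro t j mm
    rw [← pow_mul, ← pow_mul, ← pow_mul, ← pow_mul, ← pow_add]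
    congr 1
    ring
  have hnormP : ∀ (t : Fin 3) (j : Fin (q + 1)),
      (gg ^ ((t : ℕ) + 1 + (q - 1) * (j : ℕ))) ^ (q + 1) = γf t := by
    intro t j
    rw [hP, hζ1, one_pow, mul_one, ← pow_mul, hγf]
  have keyPj : ∀ (t : Fin 3) (j1 j2 : Fin (q + 1)), (j1 : ℕ) < (j2 : ℕ) →
      gg ^ ((t : ℕ) + 1 + (q - 1) * (j1 : ℕ)) = gg ^ ((t : ℕ) + 1 + (q - 1) * (j2 : ℕ)) →
      False := by
    intro t j1 j2 hlt heq
    have hj2 := j2.isLt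
    have hsplit : (q - 1) * (j2 : ℕ) = (q - 1) * (j1 : ℕ) + (q - 1) * ((j2 : ℕ) - (j1 : ℕ)) := by
      rw [← Nat.mul_add]; congr 1; omega
    rw [hsplit, ← add_assoc] at heq
    refine keyF _ _ ?_ ?_ heq
    · exact Nat.mul_pos (by omega) (by omega)
    · calc (q - 1) * ((j2 : ℕ) - (j1 : ℕ)) ≤ (q - 1) * q :=
            Nat.mul_le_mul_left _ (by omega)
        _ < (q - 1) * (q + 1) := mul_lt_mul_of_pos_left (by omega) (by omega)
        _ = M := by rw [mul_comm]; exact hM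
  have hQinj : Function.Injective Q := by
    rintro (⟨t1, j1⟩ | z1) (⟨t2, j2⟩ | z2) h
    · simp only [hQ, Sum.elim_inl] at h
      have ht : t1 = t2 := by
        by_contra hne
        apply hγdist t1 t2 hne
        rw [← hnormP t1 j1, ← hnormP t2 j2, h]
      subst ht
      have hj : j1 = j2 := by
        by_contra hne
        rcases Nat.lt_or_ge (j1 : ℕ) (j2 : ℕ) with hlt | hge
        · exact keyPj t1 j1 j2 hlt h
        · refine keyPj t1 j2 j1 ?_ h.symm
          rcases Nat.lt_or_ge (j2 : ℕ) (j1 : ℕ) with h3 | h3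
          · exact h3
          · exact absurd (Fin.ext (by omega)) hne
      rw [hj]
    · exfalso
      simp only [hQ, Sum.elim_inl, Sum.elim_inr] at h
      rw [hggu] at h
      exact Units.ne_zero _ h
    · exfalso
      simp only [hQ, Sum.elim_inl, Sum.elim_inr] at h
      rw [hggu] at h
      exact Units.ne_zero _ h.symm
    · rw [Subsingleton.elim z1 z2]
  -- coordinate functions
  set W : Fin (i + 3) → ((Fin 3 × Fin (q + 1)) ⊕ Fin 1) ⊕ Fin i → F :=
    fun a => Sum.elim (fun s => wgt s * Q s ^ (a : ℕ))
      (fun rr => lam rr * (if (a : ℕ) = (rr : ℕ) + 3 then 1 else 0)) with hW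
  -- Gram computation
  have hGramS : ∀ a b : Fin (i + 3), ∑ s, W a s * W b s ^ q = 0 := by
    intro a b
    have haval : (a : ℕ) ≤ q + 2 := by have := a.isLt; omega
    have hbval : (b : ℕ) ≤ q + 2 := by have := b.isLt; omega
    have hextra_ne : ¬((a : ℕ) = (b : ℕ) ∧ 3 ≤ (a : ℕ)) →
        ∑ rr : Fin i, W a (Sum.inr rr) * W b (Sum.inr rr) ^ q = 0 := by
      intro hno
      refine Finset.sum_eq_zero fun rr _ => ?_
      simp only [hW, Sum.elim_inr]
      by_cases h1 : (a : ℕ) = (rr : ℕ) + 3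
      · by_cases h2 : (b : ℕ) = (rr : ℕ) + 3
        · exact absurd ⟨by omega, by omega⟩ hno
        · simp [h2, zero_pow hq0]
      · simp [h1]
    have hextra_eq : 3 ≤ (a : ℕ) → (a : ℕ) = (b : ℕ) →
        ∑ rr : Fin i, W a (Sum.inr rr) * W b (Sum.inr rr) ^ q
          = lam ⟨(a : ℕ) - 3, by have := a.isLt; omega⟩ ^ (q + 1) := by
      intro h3 hab
      rw [Finset.sum_eq_single (⟨(a : ℕ) - 3, by have := a.isLt; omega⟩ : Fin i)]
      · simp only [hW, Sum.elim_inr]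
        rw [if_pos (show (a : ℕ) = (a : ℕ) - 3 + 3 by omega),
          if_pos (show (b : ℕ) = (a : ℕ) - 3 + 3 by omega)]
        ring
      · intro rr _ hne
        have hne' : (a : ℕ) ≠ (rr : ℕ) + 3 := by
          intro hcon
          apply hne
          apply Fin.ext
          show (rr : ℕ) = (a : ℕ) - 3
          omega
        simp only [hW, Sum.elim_inr]
        simp [hne']
      · intro hmem; exact absurd (Finset.mem_univ _) hmem
    have hpt0 : ∀ z : Fin 1, W a (Sum.inl (Sum.inr z)) * W b (Sum.inl (Sum.inr z)) ^ q
        = if (a : ℕ) = 0 ∧ (b : ℕ) = 0 then w0 ^ (q + 1) else 0 := by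
      intro z
      simp only [hW, Sum.elim_inl, Sum.elim_inr, hQ, hwgt]
      split_ifs with h
      · rw [h.1, h.2]; ring
      · by_cases ha0 : (a : ℕ) = 0
        · have hb0 : (b : ℕ) ≠ 0 := fun hb => h ⟨ha0, hb⟩
          simp [zero_pow hb0, zero_pow hq0]
        · simp [zero_pow ha0]
    have hcoset : ∀ t : Fin 3,
        ∑ j : Fin (q + 1), W a (Sum.inl (Sum.inl (t, j))) * W b (Sum.inl (Sum.inl (t, j))) ^ q
          = if (q + 1) ∣ ((a : ℕ) + (b : ℕ) * q) then
              u t * γf t ^ (((a : ℕ) + (b : ℕ) * q) / (q + 1)) else 0 := by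
      intro t
      have hterm : ∀ j : Fin (q + 1),
          W a (Sum.inl (Sum.inl (t, j))) * W b (Sum.inl (Sum.inl (t, j))) ^ q
            = (u t * (gg ^ ((t : ℕ) + 1)) ^ ((a : ℕ) + (b : ℕ) * q)) *
                (((gg ^ (q - 1)) ^ ((a : ℕ) + (b : ℕ) * q)) ^ (j : ℕ)) := by
        intro j
        simp only [hW, Sum.elim_inl, hQ, hwgt]
        calc (wv t * (gg ^ ((t : ℕ) + 1 + (q - 1) * (j : ℕ))) ^ (a : ℕ)) *
              (wv t * (gg ^ ((t : ℕ) + 1 + (q - 1) * (j : ℕ))) ^ (b : ℕ)) ^ q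
            = wv t ^ (q + 1) *
                (gg ^ ((t : ℕ) + 1 + (q - 1) * (j : ℕ))) ^ ((a : ℕ) + (b : ℕ) * q) := by
              rw [mul_pow, ← pow_mul (gg ^ ((t : ℕ) + 1 + (q - 1) * (j : ℕ))) (b : ℕ) q,
                pow_add, pow_succ]
              ring
          _ = u t * ((gg ^ ((t : ℕ) + 1)) ^ ((a : ℕ) + (b : ℕ) * q) *
                (((gg ^ (q - 1)) ^ ((a : ℕ) + (b : ℕ) * q)) ^ (j : ℕ))) := by
              rw [hwv t, hP]
          _ = (u t * (gg ^ ((t : ℕ) + 1)) ^ ((a : ℕ) + (b : ℕ) * q)) *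
                (((gg ^ (q - 1)) ^ ((a : ℕ) + (b : ℕ) * q)) ^ (j : ℕ)) := by ring
      rw [Finset.sum_congr rfl fun j (_ : j ∈ Finset.univ) => hterm j]
      rw [← Finset.mul_sum]
      rw [Fin.sum_univ_eq_sum_range
        (fun jj => ((gg ^ (q - 1)) ^ ((a : ℕ) + (b : ℕ) * q)) ^ jj) (q + 1)]
      rw [hgeom]
      split_ifs with h
      · rw [mul_one]
        congr 1
        simp only [hγf]
        rw [← pow_mul, ← pow_mul]
        congr 1
        rw [mul_assoc, Nat.mul_div_cancel' h]
      · rw [mul_zero]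
    rw [Fintype.sum_sum_type, Fintype.sum_sum_type, Fintype.sum_prod_type]
    rw [Finset.sum_congr rfl fun t (_ : t ∈ Finset.univ) => hcoset t]
    rw [Fin.sum_univ_one, hpt0 0]
    by_cases hdv : (q + 1) ∣ ((a : ℕ) + (b : ℕ) * q)
    · simp only [if_pos hdv]
      have hecomp : ∀ v : ℕ, (q + 1) * v = (a : ℕ) + (b : ℕ) * q →
          ((a : ℕ) + (b : ℕ) * q) / (q + 1) = v := by
        intro v hv
        rw [← hv, Nat.mul_div_cancel_left _ (by omega : 0 < q + 1)]
      rcases natCasesHSO q (a : ℕ) (b : ℕ) hq4 haval hbval hdv with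
        hab | ⟨h1, h2⟩ | ⟨h1, h2⟩ | ⟨h1, h2⟩ | ⟨h1, h2⟩
      · have he : ((a : ℕ) + (b : ℕ) * q) / (q + 1) = (a : ℕ) :=
          hecomp _ (by rw [← hab]; ring)
        rw [he]
        by_cases h3 : 3 ≤ (a : ℕ)
        · rw [hextra_eq h3 hab, hlam, if_neg (by omega)]
          rw [show ((⟨(a : ℕ) - 3, by have := a.isLt; omega⟩ : Fin i) : ℕ) + 3 = (a : ℕ)
            from by show (a : ℕ) - 3 + 3 = (a : ℕ); omega]
          ring
        · rw [hextra_ne (by omega)]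
          have ha2 : (a : ℕ) = 0 ∨ (a : ℕ) = 1 ∨ (a : ℕ) = 2 := by omega
          rcases ha2 with h0 | h0 | h0
          · rw [if_pos ⟨h0, by omega⟩, h0]
            simp only [pow_zero, mul_one]
            rw [Fin.sum_univ_three, hw0]
            ring
          · rw [if_neg (by omega), h0]
            simp only [pow_one]
            rw [hs1]; ring
          · rw [if_neg (by omega), h0, hs2]; ring
      · have he : ((a : ℕ) + (b : ℕ) * q) / (q + 1) = 1 := hecomp 1 (by rw [h1, h2]; ring)
        rw [he, hextra_ne (by omega), if_neg (by omega)]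
        simp only [pow_one]
        rw [hs1]; ring
      · have he : ((a : ℕ) + (b : ℕ) * q) / (q + 1) = q := hecomp q (by rw [h1, h2]; ring)
        rw [he, hextra_ne (by omega), if_neg (by omega)]
        rw [Finset.sum_congr rfl fun t (_ : t ∈ Finset.univ) =>
          (by rw [hγq] : u t * γf t ^ q = u t * γf t)]
        rw [hs1]; ring
      · have he : ((a : ℕ) + (b : ℕ) * q) / (q + 1) = 2 := hecomp 2 (by rw [h1, h2]; ring)
        rw [he, hextra_ne (by omega), if_neg (by omega), hs2]; ring
      · have he : ((a : ℕ) + (b : ℕ) * q) / (q + 1) = q + 1 :=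
          hecomp (q + 1) (by rw [h1, h2]; ring)
        rw [he, hextra_ne (by omega), if_neg (by omega)]
        rw [Finset.sum_congr rfl fun t (_ : t ∈ Finset.univ) =>
          (by rw [pow_succ, hγq, ← pow_two] : u t * γf t ^ (q + 1) = u t * γf t ^ 2)]
        rw [hs2]; ring
    · simp only [if_neg hdv]
      rw [Finset.sum_const_zero]
      rw [if_neg (fun hcon : (a : ℕ) = 0 ∧ (b : ℕ) = 0 =>
        hdv (by rw [hcon.1, hcon.2]; simp))]
      rw [hextra_ne (fun hcon => hdv ⟨(a : ℕ), by rw [← hcon.1]; ring⟩)]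
      ring
  -- index equivalence
  have hNE : 3 * (q + 1) + 1 + i = n + i := by omega
  set E : (((Fin 3 × Fin (q + 1)) ⊕ Fin 1) ⊕ Fin i) ≃ Fin (n + i) :=
    (Equiv.sumCongr (Equiv.sumCongr finProdFinEquiv (Equiv.refl (Fin 1)))
        (Equiv.refl (Fin i))).trans
      ((Equiv.sumCongr finSumFinEquiv (Equiv.refl (Fin i))).trans
        (finSumFinEquiv.trans (finCongr hNE))) with hE
  set Wf : Fin (i + 3) → Fin (n + i) → F := fun a idx => W a (E.symm idx) with hWf
  set T : (Fin (i + 3) → F) →ₗ[F] (Fin (n + i) → F) := monomialCodeHSO Wf with hT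
  have hGramF : ∀ a b : Fin (i + 3), ∑ idx, Wf a idx * Wf b idx ^ q = 0 := by
    intro a b
    rw [hWf]
    exact (Equiv.sum_comp E.symm fun s => W a s * W b s ^ q).trans (hGramS a b)
  have hfrobfin : ∀ gfun : Fin (i + 3) → F, (∑ b, gfun b) ^ q = ∑ b, gfun b ^ q :=
    fun gfun => hfrob Finset.univ gfun
  -- evaluation formula
  have hTeval : ∀ (c : Fin (i + 3) → F) (s : (Fin 3 × Fin (q + 1)) ⊕ Fin 1),
      T c (E (Sum.inl s)) = wgt s * ∑ a, c a * Q s ^ (a : ℕ) := by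
    intro c s
    rw [hT]
    show ∑ a, c a * Wf a (E (Sum.inl s)) = _
    rw [Finset.mul_sum]
    refine Finset.sum_congr rfl fun a _ => ?_
    rw [hWf]
    simp only [Equiv.symm_apply_apply, hW, Sum.elim_inl]
    ring
  -- polynomial facts
  have hpoly : ∀ c : Fin (i + 3) → F, c ≠ 0 →
      ∃ f : Polynomial F, f ≠ 0 ∧ f.natDegree ≤ i + 2 ∧
        ∀ x : F, f.eval x = ∑ a, c a * x ^ (a : ℕ) := by
    intro c hc
    refine ⟨∑ a : Fin (i + 3), Polynomial.C (c a) * Polynomial.X ^ (a : ℕ), ?_, ?_, ?_⟩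
    · intro hzero
      apply hc
      funext a
      have hcoeff : (∑ a' : Fin (i + 3), Polynomial.C (c a') *
          Polynomial.X ^ (a' : ℕ)).coeff (a : ℕ) = c a := by
        rw [Polynomial.finset_sum_coeff]
        rw [Finset.sum_eq_single a]
        · rw [Polynomial.coeff_C_mul, Polynomial.coeff_X_pow, if_pos rfl, mul_one]
        · intro a' _ hne
          rw [Polynomial.coeff_C_mul, Polynomial.coeff_X_pow,
            if_neg (fun hcon => hne (Fin.ext hcon.symm)), mul_zero]
        · intro hmem; exact absurd (Finset.mem_univ _) hmem
      rw [← hcoeff, hzero, Polynomial.coeff_zero]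
      rfl
    · refine Polynomial.natDegree_sum_le_of_forall_le _ _ fun a _ => ?_
      refine le_trans (Polynomial.natDegree_C_mul_le _ _) ?_
      rw [Polynomial.natDegree_X_pow]
      have := a.isLt; omega
    · intro x
      rw [Polynomial.eval_finset_sum]
      refine Finset.sum_congr rfl fun a _ => ?_
      rw [Polynomial.eval_mul, Polynomial.eval_C, Polynomial.eval_pow, Polynomial.eval_X]
  -- zero count
  have hzeros : ∀ f : Polynomial F, f ≠ 0 → f.natDegree ≤ i + 2 →
      (Finset.univ.filter fun s : (Fin 3 × Fin (q + 1)) ⊕ Fin 1 =>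
        f.eval (Q s) = 0).card ≤ i + 2 := by
    intro f hf hdeg
    calc (Finset.univ.filter fun s : (Fin 3 × Fin (q + 1)) ⊕ Fin 1 =>
          f.eval (Q s) = 0).card
        = ((Finset.univ.filter fun s : (Fin 3 × Fin (q + 1)) ⊕ Fin 1 =>
            f.eval (Q s) = 0).image Q).card := by
          rw [Finset.card_image_of_injective _ hQinj]
      _ ≤ f.roots.toFinset.card := by
          apply Finset.card_le_card
          intro x hx
          rw [Finset.mem_image] at hx
          obtain ⟨s, hs, rfl⟩ := hx
          rw [Finset.mem_filter] at hs
          rw [Multiset.mem_toFinset, Polynomial.mem_roots hf]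
          exact hs.2
      _ ≤ Multiset.card f.roots := Multiset.toFinset_card_le _
      _ ≤ f.natDegree := f.card_roots'
      _ ≤ i + 2 := hdeg
  have hcardJ : Fintype.card ((Fin 3 × Fin (q + 1)) ⊕ Fin 1) = 3 * (q + 1) + 1 := by
    simp
  -- injectivity of T
  have hTinj : Function.Injective T := by
    rw [← LinearMap.ker_eq_bot, LinearMap.ker_eq_bot']
    intro c hc
    by_contra hc0
    obtain ⟨f, hf, hdeg, heval⟩ := hpoly c hc0
    have hallzero : (Finset.univ.filter fun s : (Fin 3 × Fin (q + 1)) ⊕ Fin 1 =>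
        f.eval (Q s) = 0) = Finset.univ := by
      refine Finset.eq_univ_of_forall fun s => ?_
      rw [Finset.mem_filter]
      refine ⟨Finset.mem_univ _, ?_⟩
      have h0 : T c (E (Sum.inl s)) = 0 := by rw [hc]; rfl
      rw [hTeval c s] at h0
      rcases mul_eq_zero.mp h0 with h1 | h1
      · exact absurd h1 (hwgt_ne s)
      · rw [heval]; exact h1
    have := hzeros f hf hdeg
    rw [hallzero, Finset.card_univ, hcardJ] at this
    omega
  -- weight bound
  have hweight : ∀ c : Fin (i + 3) → F, c ≠ 0 →
      3 * (q + 1) + 1 - (i + 2) ≤ hammingNorm (T c) := by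
    intro c hc
    obtain ⟨f, hf, hdeg, heval⟩ := hpoly c hc
    have hsplit := Finset.card_filter_add_card_filter_not
      (s := (Finset.univ : Finset ((Fin 3 × Fin (q + 1)) ⊕ Fin 1)))
      (p := fun s => f.eval (Q s) = 0)
    have hz := hzeros f hf hdeg
    have hA : 3 * (q + 1) + 1 - (i + 2) ≤
        (Finset.univ.filter fun s : (Fin 3 × Fin (q + 1)) ⊕ Fin 1 =>
          ¬ f.eval (Q s) = 0).card := by
      rw [Finset.card_univ, hcardJ] at hsplit
      omega
    refine le_trans hA ?_
    unfold hammingNorm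
    apply Finset.card_le_card_of_injOn (fun s => E (Sum.inl s))
    · intro s hs
      rw [Finset.mem_coe, Finset.mem_filter] at hs ⊢
      refine ⟨Finset.mem_univ _, ?_⟩
      rw [hTeval c s]
      refine mul_ne_zero (hwgt_ne s) ?_
      rw [← heval]
      exact hs.2
    · intro s1 _ s2 _ hEe
      have := E.injective hEe
      exact Sum.inl_injective this
  -- conclusion
  refine ⟨LinearMap.range T, ?_, ?_, ?_⟩
  · intro y hy x hx
    rw [SetLike.mem_coe, LinearMap.mem_range] at hy hx
    obtain ⟨c', rfl⟩ := hy
    obtain ⟨c, rfl⟩ := hx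
    exact monomialCodeHSO_inner Wf hfrobfin hGramF c c'
  · rw [LinearMap.finrank_range_of_inj hTinj, Module.finrank_fin_fun]
    omega
  · have hc0 : (fun _ => (1 : F)) ≠ (0 : Fin (i + 3) → F) := by
      intro hcon
      have := congrFun hcon 0
      simp at this
    have hx0 : T (fun _ => 1) ≠ 0 := by
      intro hcon
      apply hc0
      apply hTinj
      rw [hcon, map_zero]
    have hSne : {w | ∃ x ∈ ((LinearMap.range T : Submodule F (Fin (n + i) → F)) :
        Set (Fin (n + i) → F)), x ≠ 0 ∧ hammingNorm x = w}.Nonempty := by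
      refine ⟨hammingNorm (T fun _ => 1), T (fun _ => 1), ?_, hx0, rfl⟩
      rw [SetLike.mem_coe, LinearMap.mem_range]
      exact ⟨fun _ => 1, rfl⟩
    refine ⟨sInf {w | ∃ x ∈ ((LinearMap.range T : Submodule F (Fin (n + i) → F)) :
        Set (Fin (n + i) → F)), x ≠ 0 ∧ hammingNorm x = w}, ?_,
      Nat.sInf_mem hSne, fun w hw => Nat.sInf_le hw⟩
    obtain ⟨x, hxC, hxne, hxw⟩ := Nat.sInf_mem hSne
    rw [SetLike.mem_coe, LinearMap.mem_range] at hxC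
    obtain ⟨c, rfl⟩ := hxC
    have hcne : c ≠ 0 := by
      intro hcon
      apply hxne
      rw [hcon, map_zero]
    have := hweight c hcne
    omega
end

section
/- Let q be an odd prime power, n = 2(q+1)+1, and k = ⌊(n+q−1)/(q+1)⌋ (so k = 2). Then for every integer i with 1 ≤ i ≤ q there exist MDS Hermitian (k+i−⌊(i−1)/2⌋−1)-dim hull codes over F_{q^2} with parameters [n, k+i, n−k−i+1] and [n, n−k−i, k+i+1]. -/
set_option linter.unusedSectionVars false
set_option maxHeartbeats 1000000


open Polynomial Module Finset


open Polynomial Module Finset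

/-- the coefficient function: -1 at 0, 1/2 elsewhere -/
noncomputable def uu (F : Type) [Field F] [DecidableEq F] (x : F) : F :=
  if x = 0 then -1 else (2 : F)⁻¹

section Aux
variable {q : ℕ} {F : Type} [Field F] [Fintype F] [DecidableEq F]

/-- characteristic facts -/
lemma aux_char (hq : IsPrimePow q) (hF : Fintype.card F = q ^ 2) :
    (q : F) = 0 ∧ (∀ x y : F, (x + y) ^ q = x ^ q + y ^ q) := by
  obtain ⟨p, e, hp, he, rfl⟩ := hq
  have hp' : p.Prime := hp.nat_prime
  obtain ⟨n, hpn, hn⟩ := FiniteField.card F (ringChar F)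
  rw [hF, ← pow_mul] at hn
  have hpr : ringChar F = p := by
    have hdvd : ringChar F ∣ p ^ (e * 2) := by
      refine hn ▸ dvd_pow_self (ringChar F) ?_
      have : (n : ℕ) ≠ 0 := n.2.ne'
      omega
    exact (Nat.prime_dvd_prime_iff_eq hpn hp').mp (hpn.dvd_of_dvd_pow hdvd)
  haveI : Fact p.Prime := ⟨hp'⟩
  haveI : CharP F p := hpr ▸ ringChar.charP F
  constructor
  · push_cast
    simp [CharP.cast_eq_zero F p, he.ne', zero_pow]
  · intro x y
    exact add_pow_char_pow x y p e

lemma aux_pow_card (hF : Fintype.card F = q ^ 2) (x : F) : (x ^ q) ^ q = x := by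
  rw [← pow_mul, ← pow_two, ← hF, FiniteField.pow_card]

lemma aux_sum_pow (hfrob : ∀ x y : F, (x + y) ^ q = x ^ q + y ^ q) (hq0 : q ≠ 0)
    {ι : Type*} (s : Finset ι) (f : ι → F) :
    (∑ i ∈ s, f i) ^ q = ∑ i ∈ s, f i ^ q := by
  classical
  induction s using Finset.induction_on with
  | empty => simp [zero_pow hq0]
  | insert _ _ h ih => rw [Finset.sum_insert h, Finset.sum_insert h, hfrob, ih]

lemma aux_powq_inj (hF : Fintype.card F = q ^ 2) {x y : F} (h : x ^ q = y ^ q) : x = y := by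
  have := congrArg (· ^ q) h
  simpa [aux_pow_card hF] using this

lemma aux_two_ne (hodd : Odd q) (hq0 : (q : F) = 0) : (2 : F) ≠ 0 := by
  intro h2
  obtain ⟨j, hj⟩ := hodd
  have : ((2 * j + 1 : ℕ) : F) = 0 := by rw [← hj]; exact hq0
  push_cast at this
  rw [h2] at this
  simp at this

lemma aux_exists_prim (hq : IsPrimePow q) (hodd : Odd q) (hF : Fintype.card F = q ^ 2) :
    ∃ ζ : F, IsPrimitiveRoot ζ (2 * (q + 1)) := by
  obtain ⟨g, hg⟩ := IsCyclic.exists_generator (α := Fˣ)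
  have hcard : Nat.card Fˣ = q ^ 2 - 1 := by
    rw [Nat.card_eq_fintype_card, Fintype.card_units, hF]
  have horder : orderOf g = q ^ 2 - 1 := by
    rw [orderOf_eq_card_of_forall_mem_zpowers hg, hcard]
  have hq2 : 2 ≤ q := hq.two_le
  have hprim : IsPrimitiveRoot g (q ^ 2 - 1) := horder ▸ IsPrimitiveRoot.orderOf g
  have hfac : q ^ 2 - 1 = ((q - 1) / 2) * (2 * (q + 1)) := by
    obtain ⟨j, hj⟩ := hodd
    subst hj
    have e1 : (2 * j + 1) ^ 2 = 4 * (j * j) + 4 * j + 1 := by ring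
    have e2 : j * (2 * (2 * j + 1 + 1)) = 4 * (j * j) + 4 * j := by ring
    have e3 : (2 * j + 1 - 1) / 2 = j := by omega
    rw [e3, e2, e1]
    omega
  have hpos : 0 < q ^ 2 - 1 := by
    have : 2 * 2 ≤ q * q := Nat.mul_le_mul hq2 hq2
    have h2 : q ^ 2 = q * q := sq q
    omega
  have := hprim.pow hpos hfac
  exact ⟨((g ^ ((q - 1) / 2) : Fˣ) : F), IsPrimitiveRoot.coe_units_iff.mpr this⟩

lemma aux_powsum {N : ℕ} {ζ : F} (hζ : IsPrimitiveRoot ζ N) (hN : 0 < N) (r : ℕ) :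
    ∑ x ∈ nthRootsFinset N (1 : F), x ^ r = if N ∣ r then ((N : ℕ) : F) else 0 := by
  by_cases hdvd : N ∣ r
  · rw [if_pos hdvd]
    have h1 : ∀ x ∈ nthRootsFinset N (1 : F), x ^ r = 1 := by
      intro x hx
      obtain ⟨c, rfl⟩ := hdvd
      rw [pow_mul, (mem_nthRootsFinset hN (1 : F)).mp hx, one_pow]
    rw [Finset.sum_congr rfl h1, Finset.sum_const, hζ.card_nthRootsFinset, nsmul_eq_mul, mul_one]
  · rw [if_neg hdvd]
    have key : ζ ^ r * ∑ x ∈ nthRootsFinset N (1 : F), x ^ r = ∑ x ∈ nthRootsFinset N (1 : F), x ^ r := by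
      rw [Finset.mul_sum]
      refine Finset.sum_nbij' (fun x => ζ * x) (fun x => ζ ^ (N - 1) * x) ?_ ?_ ?_ ?_ ?_
      · intro a ha
        rw [mem_nthRootsFinset hN] at ha ⊢
        rw [mul_pow, ha, hζ.pow_eq_one, one_mul]
      · intro a ha
        rw [mem_nthRootsFinset hN] at ha ⊢
        rw [mul_pow, ha, ← pow_mul, mul_one, mul_comm, pow_mul,
          hζ.pow_eq_one, one_pow]
      · intro a ha
        rw [← mul_assoc, ← pow_succ, Nat.sub_add_cancel hN, hζ.pow_eq_one, one_mul]
      · intro a ha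
        rw [← mul_assoc, ← pow_succ', Nat.sub_add_cancel hN, hζ.pow_eq_one, one_mul]
      · intro a ha
        rw [mul_pow, mul_comm]
    have hzero : (ζ ^ r - 1) * ∑ x ∈ nthRootsFinset N (1 : F), x ^ r = 0 := by
      rw [sub_mul, one_mul, key, sub_self]
    rcases mul_eq_zero.mp hzero with h | h
    · exact absurd (hζ.dvd_of_pow_eq_one r (sub_eq_zero.mp h)) hdvd
    · exact h

lemma aux_exists_v (hF : Fintype.card F = q ^ 2) (hq : IsPrimePow q)
    {u : F} (hu0 : u ≠ 0) (huq : u ^ q = u) : ∃ v : F, v ^ (q + 1) = u := by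
  obtain ⟨g, hg⟩ := IsCyclic.exists_generator (α := Fˣ)
  have hcard : Nat.card Fˣ = q ^ 2 - 1 := by
    rw [Nat.card_eq_fintype_card, Fintype.card_units, hF]
  have horder : orderOf g = q ^ 2 - 1 := by
    rw [orderOf_eq_card_of_forall_mem_zpowers hg, hcard]
  have hq2 : 2 ≤ q := hq.two_le
  set u' : Fˣ := Units.mk0 u hu0 with hu'
  obtain ⟨k, hk⟩ : ∃ k : ℕ, g ^ k = u' := by
    have := hg u'
    rwa [← mem_powers_iff_mem_zpowers, Submonoid.mem_powers_iff] at this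
  have hq' : u' ^ q = u' := by
    apply Units.ext
    rw [Units.val_pow_eq_pow_val, hu', Units.val_mk0]
    exact huq
  have hu1 : u' ^ (q - 1) = 1 := by
    have h1 : u' ^ (q - 1) * u' = 1 * u' := by
      rw [← pow_succ, Nat.sub_add_cancel (by omega), hq', one_mul]
    exact mul_right_cancel h1
  have hdvd : q ^ 2 - 1 ∣ k * (q - 1) := by
    rw [← horder]
    apply orderOf_dvd_of_pow_eq_one
    rw [pow_mul, hk, hu1]
  obtain ⟨c, hc⟩ : q + 1 ∣ k := by
    have hfac : q ^ 2 - 1 = (q + 1) * (q - 1) := by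
      obtain ⟨m, rfl⟩ : ∃ m, q = 2 + m := ⟨q - 2, by omega⟩
      have e1 : (2 + m + 1) * (2 + m - 1) = m * m + 4 * m + 3 := by
        rw [show 2 + m - 1 = m + 1 by omega]; ring
      have e2 : (2 + m) ^ 2 = m * m + 4 * m + 4 := by ring
      omega
    have h1 : (q + 1) * (q - 1) ∣ k * (q - 1) := hfac ▸ hdvd
    exact (Nat.mul_dvd_mul_iff_right (by omega : 0 < q - 1)).mp h1
  refine ⟨((g ^ c : Fˣ) : F), ?_⟩
  rw [← Units.val_pow_eq_pow_val, ← pow_mul, mul_comm c (q + 1), ← hc, hk, hu', Units.val_mk0]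




lemma aux_zero_not_mem {N : ℕ} (hN : 0 < N) : (0 : F) ∉ nthRootsFinset N (1 : F) := by
  intro h
  have := (mem_nthRootsFinset hN (1 : F)).mp h
  simp [zero_pow hN.ne'] at this

lemma aux_G (hq0 : (q : F) = 0) (h2 : (2 : F) ≠ 0)
    {ζ : F} (hζ : IsPrimitiveRoot ζ (2 * (q + 1))) (r : ℕ) :
    ∑ x ∈ insert (0 : F) (nthRootsFinset (2 * (q + 1)) (1 : F)), uu F x * x ^ r
      = if r ≠ 0 ∧ 2 * (q + 1) ∣ r then 1 else 0 := by
  have hN : 0 < 2 * (q + 1) := by omega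
  rw [Finset.sum_insert (aux_zero_not_mem hN)]
  have hW : ∀ x ∈ nthRootsFinset (2 * (q + 1)) (1 : F), uu F x * x ^ r = (2 : F)⁻¹ * x ^ r := by
    intro x hx
    have hx0 : x ≠ 0 := by
      intro h; exact aux_zero_not_mem hN (h ▸ hx)
    rw [uu, if_neg hx0]
  rw [Finset.sum_congr rfl hW, ← Finset.mul_sum, aux_powsum hζ hN r]
  have hNF : ((2 * (q + 1) : ℕ) : F) = 2 := by push_cast [hq0]; ring
  have hu0 : uu F 0 = -1 := by simp [uu]
  rw [hu0, hNF]
  rcases eq_or_ne r 0 with rfl | hr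
  · simp [h2]
  · rw [zero_pow hr, mul_zero, zero_add]
    by_cases hdvd : 2 * (q + 1) ∣ r
    · rw [if_pos hdvd, if_pos ⟨hr, hdvd⟩, inv_mul_cancel₀ h2]
    · rw [if_neg hdvd, if_neg (by tauto), mul_zero]

variable (q F) in
/-- the Hermitian dual as a submodule -/
def dualSub (n : ℕ) (hq0 : q ≠ 0) (hfrob : ∀ x y : F, (x + y) ^ q = x ^ q + y ^ q)
    (E : Submodule F (Fin n → F)) : Submodule F (Fin n → F) where
  carrier := hermDual q (E : Set (Fin n → F))
  zero_mem' := by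
    intro x hx
    simp [hermInner, zero_pow hq0]
  add_mem' := by
    intro y z hy hz x hx
    have := hy x hx
    have := hz x hx
    simp only [hermInner, Pi.add_apply] at *
    have : ∀ i : Fin n, x i * (y i + z i) ^ q = x i * y i ^ q + x i * z i ^ q := by
      intro i; rw [hfrob, mul_add]
    rw [Finset.sum_congr rfl (fun i _ => this i), Finset.sum_add_distrib]
    simp_all
  smul_mem' := by
    intro c y hy x hx
    have h := hy x hx
    simp only [hermInner, Pi.smul_apply, smul_eq_mul] at *
    have : ∀ i : Fin n, x i * (c * y i) ^ q = c ^ q * (x i * y i ^ q) := by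
      intro i; rw [mul_pow]; ring
    rw [Finset.sum_congr rfl (fun i _ => this i), ← Finset.mul_sum, h, mul_zero]

lemma mem_dualSub {n : ℕ} {hq0 : q ≠ 0} {hfrob : ∀ x y : F, (x + y) ^ q = x ^ q + y ^ q}
    {E : Submodule F (Fin n → F)} {y : Fin n → F} :
    y ∈ dualSub q F n hq0 hfrob E ↔ ∀ x ∈ E, ∑ i, x i * y i ^ q = 0 := Iff.rfl

lemma coe_dualSub {n : ℕ} {hq0 : q ≠ 0} {hfrob : ∀ x y : F, (x + y) ^ q = x ^ q + y ^ q}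
    {E : Submodule F (Fin n → F)} :
    (dualSub q F n hq0 hfrob E : Set (Fin n → F)) = hermDual q (E : Set (Fin n → F)) := rfl

variable (F) in
/-- the standard dot-product bilinear form on `Fin n → F` -/
def dotB (n : ℕ) : LinearMap.BilinForm F (Fin n → F) :=
  LinearMap.mk₂ F (fun x y => ∑ i, x i * y i)
    (fun x x' y => by simp [add_mul, Finset.sum_add_distrib])
    (fun c x y => by
      simp only [Pi.smul_apply, smul_eq_mul, Finset.mul_sum]
      exact Finset.sum_congr rfl fun i _ => by ring)
    (fun x y y' => by simp [mul_add, Finset.sum_add_distrib])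
    (fun c x y => by
      simp only [Pi.smul_apply, smul_eq_mul, Finset.mul_sum]
      exact Finset.sum_congr rfl fun i _ => by ring)

lemma dotB_apply {n : ℕ} (x y : Fin n → F) : dotB F n x y = ∑ i, x i * y i := rfl

lemma dotB_refl {n : ℕ} : (dotB F n).IsRefl := by
  intro x y h
  rw [dotB_apply] at h ⊢
  rw [Finset.sum_congr rfl (fun i _ => mul_comm (y i) (x i))]
  exact h

lemma dotB_nondeg {n : ℕ} : (dotB F n).Nondegenerate := by
  refine ⟨fun x h => ?_, fun x h => ?_⟩
  · funext i
    have := h (Pi.single i 1)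
    rw [dotB_apply] at this
    simpa [Pi.single_apply, Finset.sum_ite_eq'] using this
  · funext i
    have := h (Pi.single i 1)
    rw [dotB_apply] at this
    simpa [Pi.single_apply, Finset.sum_ite_eq] using this

lemma finrank_dualSub (hF : Fintype.card F = q ^ 2)
    (hq0 : q ≠ 0) (hfrob : ∀ x y : F, (x + y) ^ q = x ^ q + y ^ q)
    {n : ℕ} (E : Submodule F (Fin n → F)) :
    finrank F (dualSub q F n hq0 hfrob E) = n - finrank F E := by
  classical
  set O := (dotB F n).orthogonal E with hO
  have key : ∀ y : Fin n → F, y ∈ dualSub q F n hq0 hfrob E ↔ (fun i => y i ^ q) ∈ O := by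
    intro y
    rw [mem_dualSub, hO, LinearMap.BilinForm.mem_orthogonal_iff]
    rfl
  have e : (dualSub q F n hq0 hfrob E) ≃ O := by
    refine ⟨fun y => ⟨fun i => y.1 i ^ q, (key _).mp y.2⟩,
           fun z => ⟨fun i => z.1 i ^ q, ?_⟩, ?_, ?_⟩
    · rw [key]
      have : (fun i => (z.1 i ^ q) ^ q) = z.1 := funext fun i => aux_pow_card hF (z.1 i)
      rw [this]
      exact z.2
    · intro y
      apply Subtype.ext
      exact funext fun i => aux_pow_card hF (y.1 i)
    · intro z
      apply Subtype.ext
      exact funext fun i => aux_pow_card hF (z.1 i)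
  have hcard : Nat.card (dualSub q F n hq0 hfrob E) = Nat.card O := Nat.card_congr e
  haveI : Fintype (dualSub q F n hq0 hfrob E) := Fintype.ofFinite _
  haveI : Fintype O := Fintype.ofFinite _
  rw [Nat.card_eq_fintype_card, Nat.card_eq_fintype_card,
    card_eq_pow_finrank (K := F) (V := ↥(dualSub q F n hq0 hfrob E)),
    card_eq_pow_finrank (K := F) (V := ↥O)] at hcard
  have hrank := Nat.pow_right_injective Fintype.one_lt_card hcard
  rw [hrank, hO, LinearMap.BilinForm.finrank_orthogonal dotB_nondeg E]
  congr 1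
  simp [Module.finrank_pi]

end Aux


lemma aux_arith {q s t : ℕ} (hodd : Odd q) (hs : s ≤ q + 1) (ht : t ≤ q + 1) :
    (¬ s + t * q = 0 ∧ 2 * (q + 1) ∣ s + t * q) ↔ (s = t ∧ ¬ s = 0 ∧ Even s) := by
  obtain ⟨j, hj⟩ := hodd
  constructor
  · rintro ⟨hne, d, hd⟩
    have hd' : (s : ℤ) + t * q = 2 * (q + 1) * d := by exact_mod_cast hd
    set E : ℤ := 2 * (d : ℤ) - t with hEdef
    have he : (s : ℤ) - t = ((q : ℤ) + 1) * E := by rw [hEdef]; linarith [hd']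
    have hb1 : (s : ℤ) - t ≤ (q : ℤ) + 1 := by
      have : (s : ℤ) ≤ (q : ℤ) + 1 := by exact_mod_cast hs
      omega
    have hb2 : -((q : ℤ) + 1) ≤ (s : ℤ) - t := by
      have : (t : ℤ) ≤ (q : ℤ) + 1 := by exact_mod_cast ht
      omega
    have hq0 : (0 : ℤ) < (q : ℤ) + 1 := by positivity
    have hE : E = -1 ∨ E = 0 ∨ E = 1 := by
      rcases lt_trichotomy E 0 with h | h | h
      · left; by_contra hcon
        have h2 : E ≤ -2 := by omega
        nlinarith
      · right; left; exact h
      · right; right; by_contra hcon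
        have h2 : E ≥ 2 := by omega
        nlinarith
    rcases hE with h | h | h
    · exfalso
      rw [h, mul_neg_one] at he
      omega
    · rw [h, mul_zero] at he
      have hst : s = t := by omega
      refine ⟨hst, fun h0 => hne ?_, ?_⟩
      · rw [← hst, h0]; simp
      · have : (t : ℤ) = 2 * d := by omega
        exact ⟨d, by omega⟩
    · exfalso
      rw [h, mul_one] at he
      have hs1 : s = q + 1 := by omega
      have ht1 : t = 0 := by omega
      rw [hs1, ht1] at hd
      simp at hd
      omega
  · rintro ⟨rfl, h0, c, hc⟩
    constructor
    · have : 0 < s := Nat.pos_of_ne_zero h0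
      omega
    · exact ⟨c, by subst hc; ring⟩

lemma aux_card_filter (M : ℕ) (hM : 1 ≤ M) :
    (((range M).filter fun t => t = 0 ∨ ¬ Even t)).card = M / 2 + 1 := by
  induction M with
  | zero => omega
  | succ M ih =>
    rcases Nat.eq_or_lt_of_le hM with h | h
    · have : M = 0 := by omega
      subst this
      decide
    · have hM1 : 1 ≤ M := by omega
      rw [Finset.range_add_one, Finset.filter_insert]
      by_cases hP : M = 0 ∨ ¬ Even M
      · rw [if_pos hP, Finset.card_insert_of_notMem (by simp), ih hM1]
        rcases hP with h0 | hodd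
        · omega
        · rw [Nat.not_even_iff] at hodd
          omega
      · rw [if_neg hP, ih hM1]
        push_neg at hP
        obtain ⟨h0, heven⟩ := hP
        rw [Nat.even_iff] at heven
        omega


lemma aux_main (q : ℕ) (hq : IsPrimePow q) (hodd : Odd q)
    (F : Type) [Field F] [Fintype F] [DecidableEq F] (hF : Fintype.card F = q ^ 2)
    (m : ℕ) (hm3 : 3 ≤ m) (hmq : m ≤ q + 2) :
    ∃ C D : Submodule F (Fin (2 * (q + 1) + 1) → F),
      Module.finrank F C = m ∧
      Module.finrank F D = 2 * (q + 1) + 1 - m ∧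
      HasMinDist (C : Set (Fin (2 * (q + 1) + 1) → F)) (2 * (q + 1) + 1 - m + 1) ∧
      HasMinDist (D : Set (Fin (2 * (q + 1) + 1) → F)) (m + 1) ∧
      hermHullDim q C = m / 2 + 1 ∧
      hermHullDim q D = m / 2 + 1 := by
  classical
  obtain ⟨hq0F, hfrob⟩ := aux_char hq hF
  have hq2 : 2 ≤ q := hq.two_le
  have hq0 : q ≠ 0 := by omega
  have h2 : (2 : F) ≠ 0 := aux_two_ne hodd hq0F
  obtain ⟨ζ, hζ⟩ := aux_exists_prim hq hodd hF
  have hN : 0 < 2 * (q + 1) := by omega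
  set n : ℕ := 2 * (q + 1) + 1 with hn
  have hmn : m ≤ n := by omega
  set A : Finset F := insert (0 : F) (Polynomial.nthRootsFinset (2 * (q + 1)) (1 : F)) with hAdef
  have hA : A.card = n := by
    rw [hAdef, Finset.card_insert_of_notMem (aux_zero_not_mem hN),
      hζ.card_nthRootsFinset]
  set aE := (Finset.equivFinOfCardEq hA).symm with haE
  set a : Fin n → F := fun j => (aE j : F) with ha
  have hainj : Function.Injective a := fun i j hij => aE.injective (Subtype.ext hij)
  have hu0 : ∀ x : F, uu F x ≠ 0 := by
    intro x
    rw [uu]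
    split
    · simp
    · exact inv_ne_zero h2
  have huq : ∀ x : F, (uu F x) ^ q = uu F x := by
    intro x
    have h2q : (2 : F) ^ q = 2 := by
      have h1 : (1 : F) ^ q = 1 := one_pow q
      have := hfrob 1 1
      rw [h1] at this
      norm_num at this ⊢
      exact this
    rw [uu]
    split
    · exact hodd.neg_one_pow
    · rw [inv_pow, h2q]
  choose v hv using fun j => aux_exists_v hF hq (hu0 (a j)) (huq (a j))
  have hv0 : ∀ j, v j ≠ 0 := by
    intro j h0
    apply hu0 (a j)
    rw [← hv j, h0, zero_pow (by omega : q + 1 ≠ 0)]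
  set gen : Fin m → (Fin n → F) := fun t j => v j * a j ^ (t : ℕ) with hgen
  set C := Submodule.span F (Set.range gen) with hC
  -- Gram matrix computation
  have hgram : ∀ s t : ℕ, s ≤ q + 1 → t ≤ q + 1 →
      (∑ j : Fin n, (v j * a j ^ s) * (v j * a j ^ t) ^ q)
        = if s = t ∧ ¬ s = 0 ∧ Even s then 1 else 0 := by
    intro s t hs ht
    have step1 : ∀ j : Fin n, (v j * a j ^ s) * (v j * a j ^ t) ^ q
        = uu F (a j) * a j ^ (s + t * q) := by
      intro j
      rw [← hv j, mul_pow, ← pow_mul]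
      ring
    rw [Finset.sum_congr rfl fun j _ => step1 j]
    have step2 : ∑ j : Fin n, uu F (a j) * a j ^ (s + t * q)
        = ∑ x ∈ A, uu F x * x ^ (s + t * q) := by
      rw [← Finset.sum_coe_sort A (fun x => uu F x * x ^ (s + t * q))]
      exact Equiv.sum_comp aE fun y => uu F (y : F) * (y : F) ^ (s + t * q)
    rw [step2, hAdef, aux_G hq0F h2 hζ (s + t * q),
      if_congr (aux_arith hodd hs ht) rfl rfl]
  -- encoding facts
  have hgenval : ∀ (c : Fin m → F) (j : Fin n),
      (∑ t, c t • gen t) j = v j * ∑ t : Fin m, c t * a j ^ (t : ℕ) := by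
    intro c j
    rw [Finset.sum_apply, Finset.mul_sum]
    refine Finset.sum_congr rfl fun t _ => ?_
    rw [hgen]
    simp only [Pi.smul_apply, smul_eq_mul]
    ring
  have hpolyzero : ∀ c : Fin m → F,
      (∀ j : Fin n, ∑ t : Fin m, c t * a j ^ (t : ℕ) = 0) → c = 0 := by
    intro c hzero
    set p : Polynomial F := ∑ t : Fin m, Polynomial.C (c t) * Polynomial.X ^ (t : ℕ) with hp
    have heval : ∀ j : Fin n, p.eval (a j) = 0 := by
      intro j
      rw [hp, Polynomial.eval_finset_sum]
      rw [← hzero j]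
      exact Finset.sum_congr rfl fun t _ => by
        rw [Polynomial.eval_mul, Polynomial.eval_C, Polynomial.eval_pow, Polynomial.eval_X]
    have hdeg : p.natDegree < Fintype.card (Fin n) := by
      rw [Fintype.card_fin]
      have hle : p.natDegree ≤ m - 1 := by
        rw [hp]
        apply Polynomial.natDegree_sum_le_of_forall_le
        intro t _
        refine le_trans (Polynomial.natDegree_C_mul_X_pow_le (c t) (t : ℕ)) ?_
        omega
      omega
    have hp0 : p = 0 :=
      Polynomial.eq_zero_of_natDegree_lt_card_of_eval_eq_zero p hainj heval hdeg
    funext t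
    have hct : p.coeff (t : ℕ) = c t := by
      rw [hp, Polynomial.finset_sum_coeff]
      rw [Finset.sum_eq_single t]
      · rw [Polynomial.coeff_C_mul_X_pow]
        simp
      · intro t' _ hne
        rw [Polynomial.coeff_C_mul_X_pow]
        rw [if_neg (fun hcon => hne (Fin.ext (by omega)))]
      · intro hcon
        exact absurd (Finset.mem_univ t) hcon
    rw [hp0] at hct
    simpa using hct.symm
  have hmemC : ∀ x : Fin n → F, x ∈ C ↔ ∃ c : Fin m → F, ∑ t, c t • gen t = x := by
    intro x
    rw [hC]
    exact Submodule.mem_span_range_iff_exists_fun F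
  have hlinind : LinearIndependent F gen := by
    rw [Fintype.linearIndependent_iff]
    intro c hsum
    have hc : c = 0 := by
      apply hpolyzero
      intro j
      have h1 := congrFun hsum j
      rw [hgenval c j] at h1
      rcases mul_eq_zero.mp h1 with h | h
      · exact absurd h (hv0 j)
      · exact h
    intro i
    rw [hc]
    rfl
  have hrankC : Module.finrank F C = m := by
    rw [hC, finrank_span_eq_card hlinind, Fintype.card_fin]
  have hevalsum : ∀ (c : Fin m → F) (z : F),
      (∑ t : Fin m, Polynomial.C (c t) * Polynomial.X ^ (t : ℕ)).eval z
        = ∑ t : Fin m, c t * z ^ (t : ℕ) := by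
    intro c z
    rw [Polynomial.eval_finset_sum]
    exact Finset.sum_congr rfl fun t _ => by
      rw [Polynomial.eval_mul, Polynomial.eval_C, Polynomial.eval_pow, Polynomial.eval_X]
  have hpolymem : ∀ p : Polynomial F, p.natDegree < m →
      (fun j => v j * p.eval (a j)) ∈ C := by
    intro p hdeg
    rw [hmemC]
    refine ⟨fun t => p.coeff (t : ℕ), funext fun j => ?_⟩
    rw [hgenval]
    congr 1
    rw [Polynomial.eval_eq_sum_range' hdeg, Finset.sum_range]
  have hlbC : ∀ x : Fin n → F, x ∈ C → x ≠ 0 → n - m + 1 ≤ hammingNorm x := by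
    intro x hx hx0
    obtain ⟨c, hcx⟩ := (hmemC x).mp hx
    set p : Polynomial F := ∑ t : Fin m, Polynomial.C (c t) * Polynomial.X ^ (t : ℕ) with hp
    have hpev : ∀ j, x j = v j * p.eval (a j) := by
      intro j
      rw [← hcx, hgenval, hp, hevalsum]
    have hpne : p ≠ 0 := by
      intro h0
      apply hx0
      funext j
      rw [show x j = v j * p.eval (a j) from hpev j, h0]
      simp
    have hdegp : p.natDegree ≤ m - 1 := by
      rw [hp]
      apply Polynomial.natDegree_sum_le_of_forall_le
      intro t _
      refine le_trans (Polynomial.natDegree_C_mul_X_pow_le (c t) (t : ℕ)) ?_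
      omega
    set Z := Finset.univ.filter (fun j => x j = 0) with hZ
    have hZcard : Z.card ≤ m - 1 := by
      have hinj : Set.InjOn a Z := fun i _ j _ h => hainj h
      have hsub : ∀ j ∈ Z, a j ∈ p.roots.toFinset := by
        intro j hj
        rw [Multiset.mem_toFinset, Polynomial.mem_roots']
        refine ⟨hpne, ?_⟩
        have hxj : x j = 0 := (Finset.mem_filter.mp hj).2
        rw [hpev j] at hxj
        rcases mul_eq_zero.mp hxj with h | h
        · exact absurd h (hv0 j)
        · exact h
      calc Z.card ≤ p.roots.toFinset.card := Finset.card_le_card_of_injOn a hsub hinj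
        _ ≤ Multiset.card p.roots := Multiset.toFinset_card_le _
        _ ≤ p.natDegree := Polynomial.card_roots' p
        _ ≤ m - 1 := hdegp
    have hsplit : Z.card + hammingNorm x = n := by
      have h := Finset.card_filter_add_card_filter_not
        (s := Finset.univ) (p := fun j : Fin n => x j = 0)
      rw [Finset.card_univ, Fintype.card_fin] at h
      simpa [hammingNorm, hZ] using h
    omega
  have hwitC : ∃ x ∈ C, x ≠ 0 ∧ hammingNorm x = n - m + 1 := by
    set T : Finset (Fin n) := (Finset.range (m - 1)).attachFin (fun r hr => by
      rw [Finset.mem_range] at hr; omega) with hT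
    have hTcard : T.card = m - 1 := by rw [hT, Finset.card_attachFin, Finset.card_range]
    set p : Polynomial F := ∏ j ∈ T, (Polynomial.X - Polynomial.C (a j)) with hp
    have hpdeg : p.natDegree = m - 1 := by
      rw [hp, Polynomial.natDegree_prod _ _ (fun j _ => Polynomial.X_sub_C_ne_zero (a j))]
      rw [Finset.sum_congr rfl fun j _ => Polynomial.natDegree_X_sub_C (a j)]
      rw [Finset.sum_const, smul_eq_mul, mul_one, hTcard]
    have hx := hpolymem p (by omega)
    have hev : ∀ j, p.eval (a j) = 0 ↔ j ∈ T := by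
      intro j
      rw [hp, Polynomial.eval_prod, Finset.prod_eq_zero_iff]
      constructor
      · rintro ⟨i, hi, hzero⟩
        rw [Polynomial.eval_sub, Polynomial.eval_X, Polynomial.eval_C, sub_eq_zero] at hzero
        rwa [hainj hzero]
      · intro hj
        exact ⟨j, hj, by simp⟩
    have hxj : ∀ j, (v j * p.eval (a j) ≠ 0) ↔ j ∉ T := by
      intro j
      rw [mul_ne_zero_iff]
      constructor
      · rintro ⟨-, h⟩ hj
        exact h ((hev j).mpr hj)
      · intro hj
        exact ⟨hv0 j, fun h0 => hj ((hev j).mp h0)⟩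
    have hj0 : (⟨m - 1, by omega⟩ : Fin n) ∉ T := by
      rw [hT, Finset.mem_attachFin]
      simp
    refine ⟨fun j => v j * p.eval (a j), hx, ?_, ?_⟩
    · intro h0
      exact ((hxj _).mpr hj0) (congrFun h0 ⟨m - 1, by omega⟩)
    · have hfil : Finset.univ.filter (fun j => ¬ v j * p.eval (a j) = 0) = Finset.univ \ T := by
        ext j
        simp only [Finset.mem_filter, Finset.mem_sdiff, Finset.mem_univ, true_and]
        exact hxj j
      show (Finset.univ.filter fun j => ¬ v j * p.eval (a j) = 0).card = n - m + 1
      rw [hfil, Finset.card_sdiff_of_subset (Finset.subset_univ T), Finset.card_univ, Fintype.card_fin,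
        hTcard]
      omega
  set D := dualSub q F n hq0 hfrob C with hD
  have hrankD : Module.finrank F D = n - m := by
    rw [hD, finrank_dualSub hF hq0 hfrob C, hrankC]
  have hlbD : ∀ y : Fin n → F, y ∈ D → y ≠ 0 → m + 1 ≤ hammingNorm y := by
    intro y hy hy0
    by_contra hcon
    push_neg at hcon
    set S := Finset.univ.filter (fun j => ¬ y j = 0) with hS
    have hScard : S.card ≤ m := by
      have hnorm : hammingNorm y = S.card := rfl
      omega
    have hSne : S.Nonempty := by
      rcases Finset.eq_empty_or_nonempty S with h | h
      · exfalso
        apply hy0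
        funext j
        show y j = 0
        by_contra hj
        have hjS : j ∈ S := by rw [hS]; simp [hj]
        rw [h] at hjS
        simp at hjS
      · exact h
    obtain ⟨j₀, hj₀⟩ := hSne
    set p : Polynomial F := ∏ j ∈ S.erase j₀, (Polynomial.X - Polynomial.C (a j)) with hp
    have hpdeg : p.natDegree < m := by
      rw [hp, Polynomial.natDegree_prod _ _ (fun j _ => Polynomial.X_sub_C_ne_zero (a j))]
      rw [Finset.sum_congr rfl fun j _ => Polynomial.natDegree_X_sub_C (a j)]
      rw [Finset.sum_const, smul_eq_mul, mul_one]
      have := Finset.card_erase_of_mem hj₀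
      omega
    have hx := hpolymem p hpdeg
    have hsum : ∑ i, (v i * p.eval (a i)) * y i ^ q = 0 := hy _ hx
    have h1 : ∑ i, (v i * p.eval (a i)) * y i ^ q
        = ∑ i ∈ S, (v i * p.eval (a i)) * y i ^ q := by
      refine (Finset.sum_subset (Finset.subset_univ S) ?_).symm
      intro i _ hiS
      have hyi : y i = 0 := by
        by_contra h
        exact hiS (by rw [hS]; simp [h])
      rw [hyi, zero_pow hq0, mul_zero]
    have h2 : ∑ i ∈ S, (v i * p.eval (a i)) * y i ^ q
        = (v j₀ * p.eval (a j₀)) * y j₀ ^ q := by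
      refine Finset.sum_eq_single_of_mem j₀ hj₀ ?_
      intro i hi hne
      have hz : p.eval (a i) = 0 := by
        rw [hp, Polynomial.eval_prod]
        exact Finset.prod_eq_zero (Finset.mem_erase.mpr ⟨hne, hi⟩) (by simp)
      rw [hz]
      ring
    have hyq : y j₀ ^ q ≠ 0 := by
      apply pow_ne_zero
      have := (Finset.mem_filter.mp hj₀).2
      simpa using this
    have hevne : p.eval (a j₀) ≠ 0 := by
      rw [hp, Polynomial.eval_prod]
      refine Finset.prod_ne_zero_iff.mpr ?_
      intro i hi
      rw [Polynomial.eval_sub, Polynomial.eval_X, Polynomial.eval_C, sub_ne_zero]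
      intro hii
      exact (Finset.mem_erase.mp hi).1 (hainj hii).symm
    exact (mul_ne_zero (mul_ne_zero (hv0 j₀) hevne) hyq) (by rw [← h2, ← h1]; exact hsum)
  have hwitD : ∃ y ∈ D, y ≠ 0 ∧ hammingNorm y = m + 1 := by
    set R : Finset (Fin n) := (Finset.range (n - m - 1)).attachFin (fun r hr => by
      rw [Finset.mem_range] at hr; omega) with hR
    have hRcard : R.card = n - m - 1 := by rw [hR, Finset.card_attachFin, Finset.card_range]
    set π : (Fin n → F) →ₗ[F] ({j // j ∈ R} → F) :=
      { toFun := fun y => fun j => y j.1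
        map_add' := fun y z => rfl
        map_smul' := fun c y => rfl } with hπ
    have hπsurj : Function.Surjective π := by
      intro z
      refine ⟨fun i => if h : i ∈ R then z ⟨i, h⟩ else 0, ?_⟩
      funext j
      simp [hπ, j.2]
    have hker : Module.finrank F (LinearMap.ker π) = m + 1 := by
      have h1 := LinearMap.finrank_range_add_finrank_ker π
      rw [LinearMap.range_eq_top.mpr hπsurj, finrank_top, Module.finrank_pi,
        Fintype.card_coe, hRcard, Module.finrank_pi, Fintype.card_fin] at h1
      omega
    have hinf : 0 < Module.finrank F ↥(D ⊓ LinearMap.ker π) := by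
      have h1 := Submodule.finrank_sup_add_finrank_inf_eq D (LinearMap.ker π)
      have h2 : Module.finrank F ↥(D ⊔ LinearMap.ker π) ≤ n := by
        refine le_trans (Submodule.finrank_le _) ?_
        rw [Module.finrank_pi, Fintype.card_fin]
      rw [hrankD, hker] at h1
      omega
    haveI := Module.nontrivial_of_finrank_pos (R := F) hinf
    obtain ⟨⟨y, hy⟩, hyne⟩ := exists_ne (0 : ↥(D ⊓ LinearMap.ker π))
    have hy0 : y ≠ 0 := by
      intro h0
      apply hyne
      apply Subtype.ext
      exact h0
    have hyD : y ∈ D := hy.1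
    have hyR : ∀ j ∈ R, y j = 0 := by
      intro j hj
      have hk : π y = 0 := LinearMap.mem_ker.mp (Submodule.mem_inf.mp hy).2
      exact congrFun hk ⟨j, hj⟩
    refine ⟨y, hyD, hy0, le_antisymm ?_ (hlbD y hyD hy0)⟩
    show (Finset.univ.filter fun j => ¬ y j = 0).card ≤ m + 1
    have hsub : (Finset.univ.filter fun j => ¬ y j = 0) ⊆ Finset.univ \ R := by
      intro j hj
      rw [Finset.mem_sdiff]
      refine ⟨Finset.mem_univ j, fun hjR => ?_⟩
      exact (Finset.mem_filter.mp hj).2 (hyR j hjR)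
    refine le_trans (Finset.card_le_card hsub) ?_
    rw [Finset.card_sdiff_of_subset (Finset.subset_univ R), Finset.card_univ, Fintype.card_fin, hRcard]
    omega
  have hgramF : ∀ s t : Fin m, ∑ i, gen s i * gen t i ^ q
      = if (s : ℕ) = (t : ℕ) ∧ ¬ (s : ℕ) = 0 ∧ Even (s : ℕ) then 1 else 0 := by
    intro s t
    have hs : (s : ℕ) ≤ q + 1 := by have := s.isLt; omega
    have ht : (t : ℕ) ≤ q + 1 := by have := t.isLt; omega
    have := hgram (s : ℕ) (t : ℕ) hs ht
    simpa [hgen] using this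
  have hlin : ∀ (y : Fin n → F) (c : Fin m → F),
      ∑ i, ((∑ t, c t • gen t) i) * y i ^ q = ∑ t, c t * ∑ i, gen t i * y i ^ q := by
    intro y c
    have hpt : ∀ i, ((∑ t, c t • gen t) i) * y i ^ q = ∑ t, c t * (gen t i * y i ^ q) := by
      intro i
      rw [Finset.sum_apply, Finset.sum_mul]
      refine Finset.sum_congr rfl fun t _ => ?_
      rw [Pi.smul_apply, smul_eq_mul]
      ring
    rw [Finset.sum_congr rfl fun i _ => hpt i, Finset.sum_comm]
    exact Finset.sum_congr rfl fun t _ => by rw [← Finset.mul_sum]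
  have hsemi : ∀ (x : Fin n → F) (c : Fin m → F),
      ∑ i, x i * ((∑ t, c t • gen t) i) ^ q
        = ∑ t, (c t) ^ q * ∑ i, x i * gen t i ^ q := by
    intro x c
    have hpt : ∀ i, x i * ((∑ t, c t • gen t) i) ^ q
        = ∑ t, (c t) ^ q * (x i * gen t i ^ q) := by
      intro i
      rw [Finset.sum_apply, aux_sum_pow hfrob hq0, Finset.mul_sum]
      refine Finset.sum_congr rfl fun t _ => ?_
      rw [Pi.smul_apply, smul_eq_mul, mul_pow]
      ring
    rw [Finset.sum_congr rfl fun i _ => hpt i, Finset.sum_comm]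
    exact Finset.sum_congr rfl fun t _ => by rw [← Finset.mul_sum]
  set S' : Finset (Fin m) := Finset.univ.filter (fun t => (t : ℕ) = 0 ∨ ¬ Even (t : ℕ))
    with hS'
  have hS'card : S'.card = m / 2 + 1 := by
    have h1 : S'.card = ((Finset.range m).filter fun t => t = 0 ∨ ¬ Even t).card := by
      rw [hS', Finset.card_filter, Finset.card_filter]
      exact Fin.sum_univ_eq_sum_range (fun t => if t = 0 ∨ ¬ Even t then 1 else 0) m
    rw [h1, aux_card_filter m (by omega)]
  set Hull := Submodule.span F (gen '' (S' : Set (Fin m))) with hHull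
  have hrankHull : Module.finrank F Hull = m / 2 + 1 := by
    have hli : LinearIndependent F (fun t : {x // x ∈ S'} => gen t.1) :=
      hlinind.comp _ Subtype.val_injective
    have hrange : Set.range (fun t : {x // x ∈ S'} => gen t.1) = gen '' (S' : Set (Fin m)) := by
      ext x
      simp [Set.mem_image]
    rw [hHull, ← hrange, finrank_span_eq_card hli, Fintype.card_coe, hS'card]
  have hgenC : ∀ t : Fin m, gen t ∈ C := fun t => Submodule.subset_span ⟨t, rfl⟩
  have hgenD : ∀ t : Fin m, ((t : ℕ) = 0 ∨ ¬ Even (t : ℕ)) → gen t ∈ D := by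
    intro t hP
    rw [hD, mem_dualSub]
    intro x hx
    obtain ⟨c, rfl⟩ := (hmemC x).mp hx
    rw [hlin (gen t) c]
    refine Finset.sum_eq_zero fun t' _ => ?_
    rw [hgramF t' t, if_neg ?_, mul_zero]
    rintro ⟨h1, h2, h3⟩
    rcases hP with h0 | hodd'
    · exact h2 (h1.trans h0)
    · exact hodd' (h1 ▸ h3)
  have hhull : C ⊓ D = Hull := by
    apply le_antisymm
    · rintro x hx
      obtain ⟨hxC, hxD⟩ := Submodule.mem_inf.mp hx
      obtain ⟨c, rfl⟩ := (hmemC x).mp hxC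
      have hczero : ∀ t : Fin m, ¬((t : ℕ) = 0 ∨ ¬ Even (t : ℕ)) → c t = 0 := by
        intro t hP
        push_neg at hP
        have h0 : ∑ i, gen t i * ((∑ t', c t' • gen t') i) ^ q = 0 := by
          rw [hD, mem_dualSub] at hxD
          exact hxD (gen t) (hgenC t)
        rw [hsemi (gen t) c] at h0
        have hsum2 : ∑ t', (c t') ^ q * ∑ i, gen t i * gen t' i ^ q = (c t) ^ q := by
          rw [Finset.sum_eq_single t]
          · rw [hgramF t t, if_pos ⟨rfl, hP.1, hP.2⟩, mul_one]
          · intro t' _ hne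
            rw [hgramF t t', if_neg, mul_zero]
            rintro ⟨h1, -, -⟩
            exact hne (Fin.ext h1).symm
          · intro h
            exact absurd (Finset.mem_univ t) h
        rw [hsum2] at h0
        exact (pow_eq_zero_iff hq0).mp h0
      have hx2 : ∑ t, c t • gen t = ∑ t ∈ S', c t • gen t := by
        refine (Finset.sum_subset (Finset.subset_univ S') fun t _ ht => ?_).symm
        rw [hczero t (by simpa [hS'] using ht), zero_smul]
      rw [hx2]
      refine Submodule.sum_mem _ fun t ht => Submodule.smul_mem _ _ ?_
      exact Submodule.subset_span (Set.mem_image_of_mem gen (by simpa using ht))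
    · rw [hHull, Submodule.span_le]
      rintro _ ⟨t, ht, rfl⟩
      have hP : (t : ℕ) = 0 ∨ ¬ Even (t : ℕ) := by
        have := ht
        rw [hS'] at this
        simpa using this
      exact Submodule.mem_inf.mpr ⟨hgenC t, hgenD t hP⟩
  have hhdC : hermHullDim q C = m / 2 + 1 := by
    rw [hermHullDim]
    have h1 : (C : Set (Fin n → F)) ∩ hermDual q (C : Set (Fin n → F))
        = ((C ⊓ D : Submodule F (Fin n → F)) : Set (Fin n → F)) := by
      rw [Submodule.coe_inf, hD, coe_dualSub]
    rw [h1, Submodule.span_eq, hhull, hrankHull]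
  set DD := dualSub q F n hq0 hfrob D with hDD
  have hCD : C ≤ DD := by
    intro x hx
    rw [hDD, mem_dualSub]
    intro y hy
    have h1 : ∑ i, x i * y i ^ q = 0 := hy x hx
    have h2 : (∑ i, x i * y i ^ q) ^ q = ∑ i, y i * x i ^ q := by
      rw [aux_sum_pow hfrob hq0]
      refine Finset.sum_congr rfl fun i _ => ?_
      rw [mul_pow, aux_pow_card hF]
      ring
    rw [← h2, h1, zero_pow hq0]
  have hDDeq : DD = C := by
    refine (Submodule.eq_of_le_of_finrank_eq hCD ?_).symm
    rw [hrankC, hDD, finrank_dualSub hF hq0 hfrob D, hrankD]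
    omega
  have hhdD : hermHullDim q D = m / 2 + 1 := by
    rw [hermHullDim]
    have h1 : (D : Set (Fin n → F)) ∩ hermDual q (D : Set (Fin n → F))
        = ((D ⊓ DD : Submodule F (Fin n → F)) : Set (Fin n → F)) := by
      rw [Submodule.coe_inf]
      congr 1
    rw [h1, Submodule.span_eq, hDDeq, inf_comm D C, hhull, hrankHull]
  refine ⟨C, D, hrankC, hrankD, ?_, ?_, hhdC, hhdD⟩
  · obtain ⟨x, hx, hxne, hxnorm⟩ := hwitC
    exact ⟨⟨x, hx, hxne, hxnorm⟩, by rintro w ⟨x', hx', hx'ne, rfl⟩; exact hlbC x' hx' hx'ne⟩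
  · obtain ⟨y, hy, hyne, hynorm⟩ := hwitD
    exact ⟨⟨y, hy, hyne, hynorm⟩, by rintro w ⟨y', hy', hy'ne, rfl⟩; exact hlbD y' hy' hy'ne⟩


/-- for `q` an odd prime power, `n = 2(q+1)+1` and
`k = ⌊(n+q-1)/(q+1)⌋`, for every `1 ≤ i ≤ q` there exist MDS Hermitian
`(k+i-⌊(i-1)/2⌋-1)`-dim hull codes over `F_{q²}` with parameters
`[n, k+i, n-k-i+1]` and `[n, n-k-i, k+i+1]`. -/
theorem mds_herm_hull_length_two_q_plus_three
    (q n k : ℕ) (hq : IsPrimePow q) (hodd : Odd q)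
    (hn : n = 2 * (q + 1) + 1) (hk : k = (n + q - 1) / (q + 1))
    (F : Type) [Field F] [Fintype F] [DecidableEq F]
    (hF : Fintype.card F = q ^ 2) :
    ∀ i : ℕ, 1 ≤ i → i ≤ q →
      (∃ C : Submodule F (Fin n → F),
        Module.finrank F C = k + i ∧
          HasMinDist (C : Set (Fin n → F)) (n - k - i + 1) ∧
            hermHullDim q C = k + i - (i - 1) / 2 - 1) ∧
      (∃ C : Submodule F (Fin n → F),
        Module.finrank F C = n - k - i ∧
          HasMinDist (C : Set (Fin n → F)) (k + i + 1) ∧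
            hermHullDim q C = k + i - (i - 1) / 2 - 1) := by

  intro i hi1 hiq
  have hq2 : 2 ≤ q := hq.two_le
  have hk2 : k = 2 := by
    rw [hk, hn]
    have h1 : 2 * (q + 1) + 1 + q - 1 = 3 * q + 2 := by omega
    rw [h1]
    apply Nat.div_eq_of_lt_le
    · omega
    · omega
  subst hn
  obtain ⟨C, D, hrC, hrD, hdC, hdD, hhC, hhD⟩ :=
    aux_main q hq hodd F hF (i + 2) (by omega) (by omega)
  constructor
  · refine ⟨C, ?_, ?_, ?_⟩
    · rw [hrC]; omega
    · rw [show 2 * (q + 1) + 1 - k - i + 1 = 2 * (q + 1) + 1 - (i + 2) + 1 from by omega]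
      exact hdC
    · rw [hhC]
      obtain ⟨j, hj⟩ := hodd
      omega
  · refine ⟨D, ?_, ?_, ?_⟩
    · rw [hrD]; omega
    · rw [show k + i + 1 = (i + 2) + 1 from by omega]
      exact hdD
    · rw [hhD]
      obtain ⟨j, hj⟩ := hodd
      omega
end
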